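/- arXiv:2401.02354 — 4 statements merged into one kernel-verified Lean document; each statement's English description precedes it below -/
import Mathlib

section
/- Let A = ι →₀ ℕ be a transitive finite-rank ℕSet algebra that is a fusion semiring with involution σ, and let φ be its Frobenius–Perron character. For a simple element g = e_i one has φ(e_i) = 1 if and only if e_i is invertible, i.e., e_i * e_{σ(i)} = 1 and e_{σ(i)} * e_i = 1. -/
open Finsupp

/-- An ℕSet algebra: an associative multiplication on the free commutative monoid
`ι →₀ ℕ`, additive in each argument, with a two-sided unit. -/
structure NSetAlgebra (ι : Type*) where
  mul : (ι →₀ ℕ) → (ι →₀ ℕ) → (ι →₀ ℕ)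
  one : ι →₀ ℕ
  mul_assoc : ∀ a b c, mul (mul a b) c = mul a (mul b c)
  one_mul : ∀ a, mul one a = a
  mul_one : ∀ a, mul a one = a
  left_distrib : ∀ a b c, mul a (b + c) = mul a b + mul a c
  right_distrib : ∀ a b c, mul (a + b) c = mul a c + mul b c
  zero_mul : ∀ a, mul 0 a = 0
  mul_zero : ∀ a, mul a 0 = 0

namespace NSetAlgebra

variable {ι : Type*}

/-- The structure constants `N(i,j,k) = (e_i * e_j)(k)`. -/
noncomputable def N (A : NSetAlgebra ι) (i j k : ι) : ℕ :=
  A.mul (Finsupp.single i 1) (Finsupp.single j 1) k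

/-- Transitivity: for all simple `i, j` there are `u, v` with
`e_j ≤ e_u * e_i` and `e_j ≤ e_i * e_v`. -/
def Transitive (A : NSetAlgebra ι) : Prop :=
  ∀ i j : ι, (∃ u, Finsupp.single j 1 ≤ A.mul (Finsupp.single u 1) (Finsupp.single i 1)) ∧
             (∃ v, Finsupp.single j 1 ≤ A.mul (Finsupp.single i 1) (Finsupp.single v 1))

/-- A Frobenius–Perron character: additive, multiplicative, unital,
and strictly positive on simple elements. -/
structure IsFPCharacter (A : NSetAlgebra ι) (φ : (ι →₀ ℕ) → ℝ) : Prop where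
  map_add : ∀ a b, φ (a + b) = φ a + φ b
  map_mul : ∀ a b, φ (A.mul a b) = φ a * φ b
  map_one : φ A.one = 1
  pos : ∀ i, 0 < φ (Finsupp.single i 1)

/-- The ℝ-bilinear extension of the multiplication to vectors `ι → ℝ`:
`(r ⋆ s)(k) = ∑ i j, r i * s j * N i j k`. -/
noncomputable def starMul [Fintype ι] (A : NSetAlgebra ι) (r s : ι → ℝ) : ι → ℝ :=
  fun k => ∑ i : ι, ∑ j : ι, r i * s j * (A.N i j k : ℝ)

/-- A fusion semiring structure: an involution `σ` such that for all simples `i, j`,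
`j = σ i` iff there is a unique simple `k` with `e_k ≤ 1 ∩ (e_i * e_j)`,
iff there is a unique simple `k` with `e_k ≤ 1 ∩ (e_j * e_i)`. -/
structure IsFusionSemiring (A : NSetAlgebra ι) (σ : ι → ι) : Prop where
  involutive : ∀ i, σ (σ i) = i
  dual_iff : ∀ i j : ι,
    (∃! k, Finsupp.single k 1 ≤ A.one ∧
        Finsupp.single k 1 ≤ A.mul (Finsupp.single i 1) (Finsupp.single j 1)) ↔ j = σ i
  dual_iff' : ∀ i j : ι,
    (∃! k, Finsupp.single k 1 ≤ A.one ∧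
        Finsupp.single k 1 ≤ A.mul (Finsupp.single j 1) (Finsupp.single i 1)) ↔ j = σ i

/-- A regular element: a strictly positive vector `R` with `e_i ⋆ R = φ(e_i) • R`
for every simple `i`. -/
noncomputable def IsRegular [Fintype ι] (A : NSetAlgebra ι) (φ : (ι →₀ ℕ) → ℝ)
    (R : ι → ℝ) : Prop :=
  (∀ i, 0 < R i) ∧
  ∀ i : ι, A.starMul (fun k => ((Finsupp.single i 1 : ι →₀ ℕ) k : ℝ)) R
    = φ (Finsupp.single i 1) • R

end NSetAlgebra

/-- The real vector underlying an element of `ι →₀ ℕ`. -/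
def toRealVec {ι : Type*} (a : ι →₀ ℕ) : ι → ℝ := fun k => (a k : ℝ)

/-- The ℝ-linear extension of an additive map `(ι →₀ ℕ) → (κ →₀ ℕ)` to vectors. -/
noncomputable def linExt {ι κ : Type*} [Fintype ι]
    (f : (ι →₀ ℕ) → (κ →₀ ℕ)) (r : ι → ℝ) : κ → ℝ :=
  fun x => ∑ i : ι, r i * (f (Finsupp.single i 1) x : ℝ)


section AuxHelpers

variable {ι : Type*}

private lemma NSA_mul_nsmul_right (A : NSetAlgebra ι) (a b : ι →₀ ℕ) (n : ℕ) :
    A.mul a (n • b) = n • A.mul a b := by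
  induction n with
  | zero => simpa using A.mul_zero a
  | succ m ih => rw [succ_nsmul, succ_nsmul, A.left_distrib, ih]

private lemma NSA_mul_sum_right {κ : Type*} (A : NSetAlgebra ι) (a : ι →₀ ℕ)
    (s : Finset κ) (f : κ → ι →₀ ℕ) :
    A.mul a (∑ k ∈ s, f k) = ∑ k ∈ s, A.mul a (f k) := by
  classical
  induction s using Finset.induction with
  | empty => simpa using A.mul_zero a
  | insert _ _ hns ih =>
      rw [Finset.sum_insert hns, Finset.sum_insert hns, A.left_distrib, ih]

private lemma finsupp_decomp [Fintype ι] (b : ι →₀ ℕ) :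
    b = ∑ k : ι, b k • Finsupp.single k (1 : ℕ) := by
  classical
  ext x
  rw [Finset.sum_apply' x]
  simp [Finsupp.single_apply, Finsupp.smul_apply, mul_ite, Finset.sum_ite_eq, Finset.sum_ite_eq']

private lemma phi_zero {A : NSetAlgebra ι} {φ : (ι →₀ ℕ) → ℝ}
    (hφ : A.IsFPCharacter φ) : φ 0 = 0 := by
  have := hφ.map_add 0 0
  simp at this
  linarith

private lemma phi_nsmul {A : NSetAlgebra ι} {φ : (ι →₀ ℕ) → ℝ}
    (hφ : A.IsFPCharacter φ) (n : ℕ) (a : ι →₀ ℕ) : φ (n • a) = n * φ a := by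
  induction n with
  | zero => simpa using phi_zero hφ
  | succ m ih => rw [succ_nsmul, hφ.map_add, ih]; push_cast; ring

private lemma phi_sum {κ : Type*} {A : NSetAlgebra ι} {φ : (ι →₀ ℕ) → ℝ}
    (hφ : A.IsFPCharacter φ) (s : Finset κ) (f : κ → ι →₀ ℕ) :
    φ (∑ k ∈ s, f k) = ∑ k ∈ s, φ (f k) := by
  classical
  induction s using Finset.induction with
  | empty => simpa using phi_zero hφ
  | insert _ _ hns ih => rw [Finset.sum_insert hns, Finset.sum_insert hns, hφ.map_add, ih]

/-- Expansion of φ in coordinates. -/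
private lemma phi_eq [Fintype ι] {A : NSetAlgebra ι} {φ : (ι →₀ ℕ) → ℝ}
    (hφ : A.IsFPCharacter φ) (a : ι →₀ ℕ) :
    φ a = ∑ k : ι, (a k : ℝ) * φ (Finsupp.single k 1) := by
  conv_lhs => rw [finsupp_decomp a]
  rw [phi_sum hφ]
  exact Finset.sum_congr rfl fun k _ => phi_nsmul hφ _ _

/-- Multiplication is monotone in the right argument. -/
private lemma NSA_mul_le_right (A : NSetAlgebra ι) (x : ι →₀ ℕ) {a b : ι →₀ ℕ}
    (h : a ≤ b) : A.mul x a ≤ A.mul x b := by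
  obtain ⟨c, rfl⟩ := le_iff_exists_add.mp h
  rw [A.left_distrib]
  exact le_add_right le_rfl

/-- In a transitive ℕSet algebra the unit is a simple element. -/
private lemma unit_simple [Fintype ι] [Nonempty ι] (A : NSetAlgebra ι)
    (hA : A.Transitive) : ∃ t0 : ι, A.one = Finsupp.single t0 1 := by
  classical
  set c := A.one with hc
  -- each t in the support of the unit acts as a right unit on every simple
  have key : ∀ t : ι, c t ≠ 0 → ∀ j : ι,
      A.mul (Finsupp.single j 1) (Finsupp.single t 1) = Finsupp.single j 1 := by
    intro t ht j
    obtain ⟨u, hu⟩ := (hA t j).1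
    have htc : Finsupp.single t (1 : ℕ) ≤ c :=
      Finsupp.single_le_iff.mpr (Nat.one_le_iff_ne_zero.mpr ht)
    have h2 : A.mul (Finsupp.single u 1) (Finsupp.single t 1) ≤ Finsupp.single u 1 := by
      have := NSA_mul_le_right A (Finsupp.single u 1) htc
      rwa [hc, A.mul_one] at this
    have huj : u = j := by
      have h3 : Finsupp.single j (1 : ℕ) ≤ Finsupp.single u 1 := le_trans hu h2
      have h4 := Finsupp.le_def.mp h3 j
      simp only [Finsupp.single_eq_same] at h4
      by_contra hne
      rw [Finsupp.single_apply, if_neg hne] at h4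
      omega
    subst huj
    exact le_antisymm h2 hu
  -- the unit has total mass 1
  obtain ⟨j⟩ := ‹Nonempty ι›
  have hexp : Finsupp.single j (1 : ℕ) = (∑ t : ι, c t) • Finsupp.single j (1 : ℕ) := by
    conv_lhs => rw [← A.mul_one (Finsupp.single j 1), ← hc]
    conv_lhs => rw [finsupp_decomp c, NSA_mul_sum_right]
    rw [Finset.sum_smul]
    refine Finset.sum_congr rfl fun t _ => ?_
    rw [NSA_mul_nsmul_right]
    by_cases h : c t = 0
    · simp [h]
    · rw [key t h j]
  have hmass : ∑ t : ι, c t = 1 := by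
    have h5 := congrArg (fun f : ι →₀ ℕ => f j) hexp
    simpa using h5.symm
  -- a mass-one finsupp is a single
  obtain ⟨t0, ht0⟩ : ∃ t0, c t0 ≠ 0 := by
    by_contra h
    push_neg at h
    simp [h] at hmass
  refine ⟨t0, ?_⟩
  have ht01 : c t0 = 1 := by
    have hle : c t0 ≤ 1 := hmass ▸
      Finset.single_le_sum (f := fun t => c t) (fun i _ => Nat.zero_le _) (Finset.mem_univ t0)
    omega
  have herase : ∑ x ∈ Finset.univ.erase t0, c x + c t0 = 1 := by
    rw [← hmass]
    exact Finset.sum_erase_add _ _ (Finset.mem_univ t0)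
  have hrest : ∀ t, t ≠ t0 → c t = 0 := by
    intro t ht
    have hz : ∑ x ∈ Finset.univ.erase t0, c x = 0 := by omega
    exact (Finset.sum_eq_zero_iff).mp hz t (Finset.mem_erase.mpr ⟨ht, Finset.mem_univ t⟩)
  ext x
  rw [Finsupp.single_apply]
  by_cases hx : x = t0
  · subst hx; simpa using ht01
  · rw [if_neg (fun h => hx h.symm)]
    exact hrest x hx

private lemma mass_sum [Fintype ι] (c : ι → ℕ) (g : ι → (ι →₀ ℕ)) :
    ∑ x : ι, (∑ l : ι, c l • g l) x = ∑ l : ι, c l * ∑ x : ι, (g l) x := by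
  calc ∑ x : ι, (∑ l : ι, c l • g l) x = ∑ x : ι, ∑ l : ι, c l * (g l) x := by
        refine Finset.sum_congr rfl fun x _ => ?_
        rw [Finset.sum_apply']
        exact Finset.sum_congr rfl fun l _ => by simp
    _ = ∑ l : ι, ∑ x : ι, c l * (g l) x := Finset.sum_comm
    _ = ∑ l : ι, c l * ∑ x : ι, (g l) x := by
        exact Finset.sum_congr rfl fun l _ => (Finset.mul_sum _ _ _).symm

/-- The key counting lemma: if a nonnegative integer matrix has a positive
eigenvector with eigenvalue 1 and every column is nonzero, then every row
sums to 1. -/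
private lemma counting [Fintype ι] (d : ι → ℝ) (hd : ∀ k, 0 < d k) (n : ι → ι → ℕ)
    (heig : ∀ j, d j = ∑ k : ι, (n j k : ℝ) * d k)
    (hcol : ∀ k, ∃ u, 1 ≤ n u k) :
    ∀ j, ∑ k : ι, n j k = 1 := by
  classical
  have hcolsum : ∀ k, 1 ≤ ∑ j : ι, n j k := fun k => by
    obtain ⟨u, hu⟩ := hcol k
    exact le_trans hu (Finset.single_le_sum (f := fun j => n j k)
      (fun i _ => Nat.zero_le _) (Finset.mem_univ u))
  -- column sums are exactly 1
  have hcol1 : ∀ k, ∑ j : ι, n j k = 1 := by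
    have hsum : ∑ j : ι, d j = ∑ k : ι, (∑ j : ι, (n j k : ℝ)) * d k := by
      calc ∑ j : ι, d j = ∑ j : ι, ∑ k : ι, (n j k : ℝ) * d k :=
            Finset.sum_congr rfl fun j _ => heig j
        _ = ∑ k : ι, ∑ j : ι, (n j k : ℝ) * d k := Finset.sum_comm
        _ = ∑ k : ι, (∑ j : ι, (n j k : ℝ)) * d k := by
            refine Finset.sum_congr rfl fun k _ => ?_
            rw [Finset.sum_mul]
    have hzero : ∑ k : ι, ((∑ j : ι, (n j k : ℝ)) - 1) * d k = 0 := by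
      have hh : ∑ k : ι, ((∑ j : ι, (n j k : ℝ)) - 1) * d k
          = (∑ k : ι, (∑ j : ι, (n j k : ℝ)) * d k) - ∑ k : ι, d k := by
        rw [← Finset.sum_sub_distrib]
        refine Finset.sum_congr rfl fun k _ => by ring
      rw [hh, ← hsum]
      ring
    intro k
    have hnonneg : ∀ k : ι, 0 ≤ ((∑ j : ι, (n j k : ℝ)) - 1) * d k := by
      intro k
      apply mul_nonneg _ (hd k).le
      have h1 : (1 : ℝ) ≤ ∑ j : ι, (n j k : ℝ) := by
        exact_mod_cast hcolsum k
      linarith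
    have h2 := (Finset.sum_eq_zero_iff_of_nonneg (fun k _ => hnonneg k)).mp hzero k
      (Finset.mem_univ k)
    have hne : d k ≠ 0 := (hd k).ne'
    have h1 : (∑ j : ι, (n j k : ℝ)) = 1 := by
      rcases mul_eq_zero.mp h2 with h | h
      · linarith
      · exact absurd h hne
    have : ((∑ j : ι, n j k : ℕ) : ℝ) = 1 := by push_cast; exact h1
    exact_mod_cast this
  -- total number of entries
  have htot : ∑ j : ι, ∑ k : ι, n j k = ∑ j : ι, (1 : ℕ) := by
    rw [Finset.sum_comm]
    exact Finset.sum_congr rfl fun k _ => hcol1 k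
  -- every row is nonzero
  have hrow : ∀ j, 1 ≤ ∑ k : ι, n j k := by
    intro j
    by_contra h
    push_neg at h
    have h0 : ∀ k, n j k = 0 := by
      intro k
      have hz : ∑ k : ι, n j k = 0 := by omega
      exact (Finset.sum_eq_zero_iff).mp hz k (Finset.mem_univ k)
    have h6 := heig j
    simp [h0] at h6
    exact absurd h6 (hd j).ne'
  intro j
  exact ((Finset.sum_eq_sum_iff_of_le (fun i _ => hrow i)).mp htot.symm j
    (Finset.mem_univ j)).symm

/-- pinpoint a row of sum 1 with a known nonzero entry -/
private lemma pin [Fintype ι] (f : ι → ℕ) (hsum : ∑ k : ι, f k = 1) (t0 : ι)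
    (ht : 1 ≤ f t0) : f t0 = 1 ∧ ∀ k, k ≠ t0 → f k = 0 := by
  classical
  have herase := Finset.sum_erase_add Finset.univ f (Finset.mem_univ t0)
  rw [hsum] at herase
  have ht01 : f t0 = 1 := by
    have hle : f t0 ≤ 1 := hsum ▸
      Finset.single_le_sum (f := f) (fun i _ => Nat.zero_le _) (Finset.mem_univ t0)
    omega
  refine ⟨ht01, fun k hk => ?_⟩
  have hz : ∑ x ∈ Finset.univ.erase t0, f x = 0 := by omega
  exact (Finset.sum_eq_zero_iff).mp hz k (Finset.mem_erase.mpr ⟨hk, Finset.mem_univ k⟩)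

end AuxHelpers

open NSetAlgebra in
/-- In a fusion semiring, a simple element has FP dimension 1 iff it is invertible:
`φ(e_i) = 1 ↔ e_i * e_{σ i} = 1 ∧ e_{σ i} * e_i = 1`. -/
theorem stmt13 {ι : Type*} [Fintype ι] [Nonempty ι]
    (A : NSetAlgebra ι) (hA : A.Transitive)
    (σ : ι → ι) (hσ : A.IsFusionSemiring σ)
    (φ : (ι →₀ ℕ) → ℝ) (hφ : A.IsFPCharacter φ) (i : ι) :
    φ (Finsupp.single i 1) = 1 ↔
      (A.mul (Finsupp.single i 1) (Finsupp.single (σ i) 1) = A.one ∧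
       A.mul (Finsupp.single (σ i) 1) (Finsupp.single i 1) = A.one) := by
  classical
  -- notation
  set e : ι → (ι →₀ ℕ) := fun j => Finsupp.single j 1 with he
  obtain ⟨t0, ht0⟩ := unit_simple A hA
  have dpos : ∀ k, 0 < φ (e k) := fun k => hφ.pos k
  have dt0 : φ (e t0) = 1 := by
    have h9 : A.one = e t0 := ht0
    rw [← h9]; exact hφ.map_one
  -- fusion consequences
  have hfus1 : 1 ≤ (A.mul (e i) (e (σ i))) t0 := by
    obtain ⟨k, ⟨hk1, hk2⟩, -⟩ := (hσ.dual_iff i (σ i)).mpr rfl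
    have hkt : k = t0 := by
      rw [ht0] at hk1
      have h4 := Finsupp.le_def.mp hk1 k
      simp only [Finsupp.single_eq_same] at h4
      by_contra hne
      rw [Finsupp.single_apply, if_neg (fun h => hne h.symm)] at h4
      omega
    subst hkt
    have := Finsupp.le_def.mp hk2 k
    simpa [he] using this
  have hfus2 : 1 ≤ (A.mul (e (σ i)) (e i)) t0 := by
    obtain ⟨k, ⟨hk1, hk2⟩, -⟩ := (hσ.dual_iff' i (σ i)).mpr rfl
    have hkt : k = t0 := by
      rw [ht0] at hk1
      have h4 := Finsupp.le_def.mp hk1 k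
      simp only [Finsupp.single_eq_same] at h4
      by_contra hne
      rw [Finsupp.single_apply, if_neg (fun h => hne h.symm)] at h4
      omega
    subst hkt
    have := Finsupp.le_def.mp hk2 k
    simpa [he] using this
  constructor
  · -- forward: FPdim 1 implies invertible
    intro hdi
    have hdi' : φ (e i) = 1 := hdi
    have heigL : ∀ j, φ (e j) = ∑ k : ι, ((A.mul (e i) (e j)) k : ℝ) * φ (e k) := by
      intro j
      have h1 : φ (A.mul (e i) (e j)) = φ (e j) := by
        rw [hφ.map_mul, hdi', _root_.one_mul]
      rw [← h1, phi_eq hφ]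
    have heigR : ∀ j, φ (e j) = ∑ k : ι, ((A.mul (e j) (e i)) k : ℝ) * φ (e k) := by
      intro j
      have h1 : φ (A.mul (e j) (e i)) = φ (e j) := by
        rw [hφ.map_mul, hdi', _root_.mul_one]
      rw [← h1, phi_eq hφ]
    have hcolL : ∀ k, ∃ u, 1 ≤ (A.mul (e i) (e u)) k := by
      intro k
      obtain ⟨v, hv⟩ := (hA i k).2
      exact ⟨v, by simpa using Finsupp.le_def.mp hv k⟩
    have hcolR : ∀ k, ∃ u, 1 ≤ (A.mul (e u) (e i)) k := by
      intro k
      obtain ⟨u, hu⟩ := (hA i k).1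
      exact ⟨u, by simpa using Finsupp.le_def.mp hu k⟩
    have hrowL := counting (fun k => φ (e k)) dpos (fun j k => (A.mul (e i) (e j)) k)
      heigL hcolL
    have hrowR := counting (fun k => φ (e k)) dpos (fun j k => (A.mul (e j) (e i)) k)
      heigR hcolR
    constructor
    · obtain ⟨h1, h0⟩ := pin (fun k => (A.mul (e i) (e (σ i))) k) (hrowL (σ i)) t0 hfus1
      rw [ht0]
      ext x
      rw [Finsupp.single_apply]
      by_cases hx : t0 = x
      · subst hx; rw [if_pos rfl]; exact h1
      · rw [if_neg hx]; exact h0 x (fun h => hx h.symm)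
    · obtain ⟨h1, h0⟩ := pin (fun k => (A.mul (e (σ i)) (e i)) k) (hrowR (σ i)) t0 hfus2
      rw [ht0]
      ext x
      rw [Finsupp.single_apply]
      by_cases hx : t0 = x
      · subst hx; rw [if_pos rfl]; exact h1
      · rw [if_neg hx]; exact h0 x (fun h => hx h.symm)
  · -- backward: invertible implies FPdim 1
    rintro ⟨H1, H2⟩
    set n : ι → ι → ℕ := fun k l => (A.mul (e i) (e k)) l with hn
    -- the mass function
    set w : (ι →₀ ℕ) → ℕ := fun a => ∑ x : ι, a x with hw
    have wsingle : ∀ k, w (e k) = 1 := by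
      intro k
      simp only [hw, he, Finsupp.single_apply]
      rw [Finset.sum_ite_eq Finset.univ k (fun _ => 1)]
      simp
    -- e_{σi} e_l is nonzero
    have hnz : ∀ l, 1 ≤ w (A.mul (e (σ i)) (e l)) := by
      intro l
      have hne : A.mul (e (σ i)) (e l) ≠ 0 := by
        intro h0
        have : e l = 0 := by
          have hassoc := A.mul_assoc (e i) (e (σ i)) (e l)
          rw [H1, A.one_mul, h0, A.mul_zero] at hassoc
          exact hassoc
        have := congrArg (fun f : ι →₀ ℕ => f l) this
        simp [he] at this
      obtain ⟨x, hx⟩ : ∃ x, (A.mul (e (σ i)) (e l)) x ≠ 0 := by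
        by_contra h
        push_neg at h
        exact hne (Finsupp.ext h)
      calc 1 ≤ (A.mul (e (σ i)) (e l)) x := Nat.one_le_iff_ne_zero.mpr hx
        _ ≤ w (A.mul (e (σ i)) (e l)) :=
          Finset.single_le_sum (f := fun x => (A.mul (e (σ i)) (e l)) x)
            (fun _ _ => Nat.zero_le _) (Finset.mem_univ x)
    -- row sums of n are 1
    have hrow : ∀ k, ∑ l : ι, n k l = 1 := by
      intro k
      have hdec : e k = ∑ l : ι, n k l • A.mul (e (σ i)) (e l) := by
        have hassoc := A.mul_assoc (e (σ i)) (e i) (e k)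
        rw [H2, A.one_mul] at hassoc
        calc e k = A.mul (e (σ i)) (A.mul (e i) (e k)) := hassoc
          _ = A.mul (e (σ i)) (∑ l : ι, n k l • e l) := by
              congr 1
              exact finsupp_decomp (A.mul (e i) (e k))
          _ = ∑ l : ι, n k l • A.mul (e (σ i)) (e l) := by
              rw [NSA_mul_sum_right]
              exact Finset.sum_congr rfl fun l _ => NSA_mul_nsmul_right A _ _ _
      have hmass : 1 = ∑ l : ι, n k l * w (A.mul (e (σ i)) (e l)) := by
        have h5 := congrArg w hdec
        rw [wsingle k] at h5
        rw [h5]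
        exact mass_sum (fun l => n k l) (fun l => A.mul (e (σ i)) (e l))
      have hle : ∑ l : ι, n k l ≤ 1 := by
        rw [hmass]
        exact Finset.sum_le_sum fun l _ => Nat.le_mul_of_pos_right _ (hnz l)
      have hge : 1 ≤ ∑ l : ι, n k l := by
        by_contra h
        push_neg at h
        have h0 : ∀ l, n k l = 0 := by
          intro l
          have hz : ∑ l : ι, n k l = 0 := by omega
          exact (Finset.sum_eq_zero_iff).mp hz l (Finset.mem_univ l)
        have h9 : (1:ℕ) = 0 := by
          rw [hmass]
          exact Finset.sum_eq_zero fun l _ => by rw [h0 l, Nat.zero_mul]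
        exact one_ne_zero h9
      omega
    -- column sums are at least 1, hence exactly 1
    have hcolge : ∀ l, 1 ≤ ∑ k : ι, n k l := by
      intro l
      obtain ⟨v, hv⟩ := (hA i l).2
      have h7 : 1 ≤ n v l := by simpa [hn, he] using Finsupp.le_def.mp hv l
      exact le_trans h7 (Finset.single_le_sum (f := fun k => n k l)
        (fun _ _ => Nat.zero_le _) (Finset.mem_univ v))
    have htot : ∑ l : ι, ∑ k : ι, n k l = ∑ l : ι, (1 : ℕ) := by
      rw [Finset.sum_comm]
      exact Finset.sum_congr rfl fun k _ => hrow k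
    have hcol1 : ∀ l, ∑ k : ι, n k l = 1 := by
      intro l
      exact ((Finset.sum_eq_sum_iff_of_le (fun x _ => hcolge x)).mp htot.symm l
        (Finset.mem_univ l)).symm
    -- conclude
    have hS : φ (e i) * (∑ k : ι, φ (e k)) = ∑ k : ι, φ (e k) := by
      calc φ (e i) * (∑ k : ι, φ (e k)) = ∑ k : ι, φ (e i) * φ (e k) := by
            rw [Finset.mul_sum]
        _ = ∑ k : ι, φ (A.mul (e i) (e k)) := by
            exact Finset.sum_congr rfl fun k _ => (hφ.map_mul _ _).symm
        _ = ∑ k : ι, ∑ l : ι, (n k l : ℝ) * φ (e l) := by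
            exact Finset.sum_congr rfl fun k _ => phi_eq hφ _
        _ = ∑ l : ι, (∑ k : ι, (n k l : ℝ)) * φ (e l) := by
            rw [Finset.sum_comm]
            exact Finset.sum_congr rfl fun l _ => (Finset.sum_mul _ _ _).symm
        _ = ∑ l : ι, φ (e l) := by
            refine Finset.sum_congr rfl fun l _ => ?_
            have : (∑ k : ι, (n k l : ℝ)) = 1 := by exact_mod_cast hcol1 l
            rw [this, _root_.one_mul]
    have hSpos : 0 < ∑ k : ι, φ (e k) := by
      have := dpos i
      exact Finset.sum_pos (fun k _ => dpos k) ⟨i, Finset.mem_univ i⟩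
    have := mul_right_cancel₀ hSpos.ne' (hS.trans (_root_.one_mul _).symm)
    simpa [he] using this
end

section
/- Let A = ι →₀ ℕ and B = κ →₀ ℕ be transitive finite-rank ℕSet algebras with Frobenius–Perron characters φ_A and φ_B, and let f : (ι →₀ ℕ) → (κ →₀ ℕ) be a morphism of ℕSet algebras, i.e., f is additive, multiplicative (f(a * b) = f(a) * f(b)) and unital (f(1) = 1). Then: (1) f preserves Frobenius–Perron dimensions: φ_B(f(a)) = φ_A(a) for all a ∈ ι →₀ ℕ; and (2) if f is dominant (for every x ∈ κ there exists a ∈ ι →₀ ℕ with e_x ≤ f(a)), then for any regular elements R_A of A and R_B of B, the ℝ-linear extension f_ℝ of f satisfies f_ℝ(R_A) = (φ̂_A(R_A)/φ̂_B(R_B)) • R_B. -/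
open Finsupp

section AuxLemmas

variable {ι : Type*} [Fintype ι]

lemma finsupp_eq_sum_single' (a : ι →₀ ℕ) : a = ∑ k, Finsupp.single k (a k) := by
  classical
  ext x
  rw [Finsupp.finset_sum_apply]
  simp [Finsupp.single_apply]

lemma addext {M : Type*} [AddCommMonoid M] (F : (ι →₀ ℕ) → M) (h0 : F 0 = 0)
    (hadd : ∀ a b, F (a + b) = F a + F b) (a : ι →₀ ℕ) :
    F a = ∑ k, a k • F (Finsupp.single k 1) := by
  classical
  have hsingle : ∀ (k : ι) (n : ℕ), F (Finsupp.single k n) = n • F (Finsupp.single k 1) := by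
    intro k n
    induction n with
    | zero => simp [h0]
    | succ m ih =>
        have h : Finsupp.single k (m + 1) = Finsupp.single k m + Finsupp.single k 1 :=
          Finsupp.single_add k m 1
        rw [h, hadd, ih, succ_nsmul]
  have hsum : ∀ (s : Finset ι) (g : ι → (ι →₀ ℕ)),
      F (∑ k ∈ s, g k) = ∑ k ∈ s, F (g k) := by
    intro s g
    induction s using Finset.induction with
    | empty => simpa using h0
    | insert _ _ hx ih => rw [Finset.sum_insert hx, hadd, ih, Finset.sum_insert hx]
  conv_lhs => rw [finsupp_eq_sum_single' a]
  rw [hsum]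
  exact Finset.sum_congr rfl fun k _ => hsingle k (a k)

lemma addext_real (φ : (ι →₀ ℕ) → ℝ)
    (hadd : ∀ a b, φ (a + b) = φ a + φ b) (a : ι →₀ ℕ) :
    φ a = ∑ k, (a k : ℝ) * φ (Finsupp.single k 1) := by
  have h0 : φ 0 = 0 := by
    have h := hadd 0 0
    rw [add_zero] at h
    linarith
  rw [addext φ h0 hadd a]
  exact Finset.sum_congr rfl fun k _ => by rw [nsmul_eq_mul]

lemma NSetAlgebra.mul_eval (A : NSetAlgebra ι) (a b : ι →₀ ℕ) (k : ι) :
    A.mul a b k = ∑ i, ∑ j, a i * b j * A.N i j k := by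
  have h1 : A.mul a b = ∑ i, a i • A.mul (Finsupp.single i 1) b :=
    addext (fun x => A.mul x b) (A.zero_mul b) (fun x y => A.right_distrib x y b) a
  have h2 : ∀ i, A.mul (Finsupp.single i 1) b
      = ∑ j, b j • A.mul (Finsupp.single i 1) (Finsupp.single j 1) := fun i =>
    addext (fun x => A.mul (Finsupp.single i 1) x) (A.mul_zero _) (A.left_distrib _) b
  rw [h1, Finsupp.finset_sum_apply]
  refine Finset.sum_congr rfl fun i _ => ?_
  rw [Finsupp.smul_apply, h2 i, Finsupp.finset_sum_apply]
  simp only [Finsupp.smul_apply, smul_eq_mul]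
  rw [Finset.mul_sum]
  exact Finset.sum_congr rfl fun j _ => by rw [← _root_.mul_assoc]; rfl

lemma pf_ge {ι : Type*} [Fintype ι] [Nonempty ι] (M : ι → ι → ℝ)
    (hM : ∀ i j, 0 < M i j) (v w : ι → ℝ) (hv : ∀ i, 0 < v i) (hw : ∀ i, 0 < w i)
    (lam mu : ℝ) (hMv : ∀ k, ∑ j, M k j * v j = lam * v k)
    (hMw : ∀ k, ∑ j, M k j * w j = mu * w k) : mu ≤ lam := by
  obtain ⟨i0, -, hi0⟩ := Finset.exists_min_image Finset.univ (fun i => v i / w i)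
    ⟨Classical.arbitrary ι, Finset.mem_univ _⟩
  set t := v i0 / w i0 with ht
  have htw : ∀ j, t * w j ≤ v j := by
    intro j
    have h := hi0 j (Finset.mem_univ j)
    calc t * w j ≤ (v j / w j) * w j :=
          mul_le_mul_of_nonneg_right h (le_of_lt (hw j))
      _ = v j := div_mul_cancel₀ _ (ne_of_gt (hw j))
  have h1 : t * (mu * w i0) ≤ lam * v i0 := by
    rw [← hMv i0, ← hMw i0, Finset.mul_sum]
    refine Finset.sum_le_sum fun j _ => ?_
    calc t * (M i0 j * w j) = M i0 j * (t * w j) := by ring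
      _ ≤ M i0 j * v j := mul_le_mul_of_nonneg_left (htw j) (le_of_lt (hM i0 j))
  have hv0 : v i0 = t * w i0 := by
    rw [ht, div_mul_cancel₀ _ (ne_of_gt (hw i0))]
  rw [hv0] at h1
  have ht0 : 0 < t * w i0 := by rw [← hv0]; exact hv i0
  nlinarith [ht0]

lemma pf_prop {ι : Type*} [Fintype ι] [Nonempty ι] (M : ι → ι → ℝ)
    (hM : ∀ i j, 0 < M i j) (v w : ι → ℝ) (hv : ∀ i, 0 < v i) (hw : ∀ i, 0 < w i)
    (lam mu : ℝ) (hMv : ∀ k, ∑ j, M k j * v j = lam * v k)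
    (hMw : ∀ k, ∑ j, M k j * w j = mu * w k) :
    ∃ t : ℝ, 0 < t ∧ ∀ k, v k = t * w k := by
  have hlm : lam = mu :=
    le_antisymm (pf_ge M hM w v hw hv mu lam hMw hMv) (pf_ge M hM v w hv hw lam mu hMv hMw)
  obtain ⟨i0, -, hi0⟩ := Finset.exists_min_image Finset.univ (fun i => v i / w i)
    ⟨Classical.arbitrary ι, Finset.mem_univ _⟩
  set t := v i0 / w i0 with ht
  have htpos : 0 < t := div_pos (hv i0) (hw i0)
  refine ⟨t, htpos, ?_⟩
  have htw : ∀ j, t * w j ≤ v j := by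
    intro j
    have h := hi0 j (Finset.mem_univ j)
    calc t * w j ≤ (v j / w j) * w j :=
          mul_le_mul_of_nonneg_right h (le_of_lt (hw j))
      _ = v j := div_mul_cancel₀ _ (ne_of_gt (hw j))
  have hv0 : v i0 = t * w i0 := by
    rw [ht, div_mul_cancel₀ _ (ne_of_gt (hw i0))]
  have hzero : ∑ j, M i0 j * (v j - t * w j) = 0 := by
    have hsplit : ∑ j, M i0 j * (v j - t * w j)
        = (∑ j, M i0 j * v j) - t * (∑ j, M i0 j * w j) := by
      rw [Finset.mul_sum, ← Finset.sum_sub_distrib]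
      exact Finset.sum_congr rfl fun j _ => by ring
    rw [hsplit, hMv i0, hMw i0, hv0, hlm]
    ring
  intro k
  have hk := (Finset.sum_eq_zero_iff_of_nonneg (fun j _ =>
    mul_nonneg (le_of_lt (hM i0 j)) (sub_nonneg.mpr (htw j)))).mp hzero k (Finset.mem_univ k)
  rcases mul_eq_zero.mp hk with h | h
  · exact absurd h (ne_of_gt (hM i0 k))
  · linarith [sub_eq_zero.mp h]

end AuxLemmas
section Aux2

lemma fp_eigen {ι : Type*} [Fintype ι] (A : NSetAlgebra ι) (φ : (ι →₀ ℕ) → ℝ)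
    (haddφ : ∀ a b, φ (a + b) = φ a + φ b)
    (hmulφ : ∀ a b, φ (A.mul a b) = φ a * φ b) (j : ι) :
    ∑ k, (∑ i, (A.N i j k : ℝ)) * φ (Finsupp.single k 1)
      = (∑ i, φ (Finsupp.single i 1)) * φ (Finsupp.single j 1) := by
  calc ∑ k, (∑ i, (A.N i j k : ℝ)) * φ (Finsupp.single k 1)
      = ∑ k, ∑ i, (A.N i j k : ℝ) * φ (Finsupp.single k 1) :=
        Finset.sum_congr rfl fun k _ => Finset.sum_mul _ _ _
    _ = ∑ i, ∑ k, (A.N i j k : ℝ) * φ (Finsupp.single k 1) := Finset.sum_comm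
    _ = ∑ i, φ (A.mul (Finsupp.single i 1) (Finsupp.single j 1)) := by
        refine Finset.sum_congr rfl fun i _ => ?_
        rw [addext_real φ haddφ (A.mul (Finsupp.single i 1) (Finsupp.single j 1))]
        exact Finset.sum_congr rfl fun k _ => rfl
    _ = (∑ i, φ (Finsupp.single i 1)) * φ (Finsupp.single j 1) := by
        rw [Finset.sum_mul]
        exact Finset.sum_congr rfl fun i _ => hmulφ _ _

lemma Mpos {ι : Type*} [Fintype ι] (A : NSetAlgebra ι) (hA : A.Transitive) (j k : ι) :
    0 < ∑ i, (A.N i j k : ℝ) := by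
  obtain ⟨u, hu⟩ := (hA j k).1
  have h1 : 1 ≤ A.N u j k := by simpa [NSetAlgebra.N] using Finsupp.le_def.mp hu k
  refine Finset.sum_pos' (fun i _ => Nat.cast_nonneg _) ⟨u, Finset.mem_univ u, ?_⟩
  exact_mod_cast Nat.lt_of_lt_of_le Nat.zero_lt_one h1

lemma mul_single_left_eval {ι : Type*} [Fintype ι] (A : NSetAlgebra ι) (x : ι)
    (b : ι →₀ ℕ) (k : ι) :
    A.mul (Finsupp.single x 1) b k = ∑ j, b j * A.N x j k := by
  classical
  rw [A.mul_eval]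
  rw [Finset.sum_eq_single x]
  · simp [Finsupp.single_apply]
  · intro i _ hix
    apply Finset.sum_eq_zero
    intro j _
    simp only [Finsupp.single_apply]
    rw [if_neg (fun h : x = i => hix h.symm)]
    simp
  · intro h
    exact absurd (Finset.mem_univ x) h

lemma star_single {ι : Type*} [Fintype ι] (A : NSetAlgebra ι) (R : ι → ℝ) (i k : ι) :
    A.starMul (fun k' => ((Finsupp.single i 1 : ι →₀ ℕ) k' : ℝ)) R k
      = ∑ j, R j * (A.N i j k : ℝ) := by
  classical
  unfold NSetAlgebra.starMul
  rw [Finset.sum_eq_single i]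
  · refine Finset.sum_congr rfl fun j _ => ?_
    simp [Finsupp.single_apply]
  · intro b _ hbi
    apply Finset.sum_eq_zero
    intro j _
    simp only [Finsupp.single_apply]
    rw [if_neg (fun h : i = b => hbi h.symm)]
    simp
  · intro h
    exact absurd (Finset.mem_univ i) h

end Aux2
open NSetAlgebra in
/-- A morphism of transitive ℕSet algebras preserves FP dimensions, and if it is
dominant it sends the regular element of `A` to
`(FPdim(R_A)/FPdim(R_B)) • R_B`. -/
theorem stmt14 {ι κ : Type*} [Fintype ι] [Nonempty ι] [Fintype κ] [Nonempty κ]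
    (A : NSetAlgebra ι) (B : NSetAlgebra κ) (hA : A.Transitive) (hB : B.Transitive)
    (φA : (ι →₀ ℕ) → ℝ) (φB : (κ →₀ ℕ) → ℝ)
    (hφA : A.IsFPCharacter φA) (hφB : B.IsFPCharacter φB)
    (f : (ι →₀ ℕ) → (κ →₀ ℕ))
    (hadd : ∀ a b, f (a + b) = f a + f b)
    (hmul : ∀ a b, f (A.mul a b) = B.mul (f a) (f b))
    (hone : f A.one = B.one) :
    (∀ a, φB (f a) = φA a) ∧
    ((∀ x : κ, ∃ a, Finsupp.single x 1 ≤ f a) →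
      ∀ RA RB, A.IsRegular φA RA → B.IsRegular φB RB →
        linExt f RA =
          ((∑ i : ι, RA i * φA (Finsupp.single i 1)) /
            (∑ x : κ, RB x * φB (Finsupp.single x 1))) • RB) := by
  classical
  -- the pulled-back character
  have hψadd : ∀ a b : ι →₀ ℕ, φB (f (a + b)) = φB (f a) + φB (f b) := fun a b => by
    rw [hadd, hφB.map_add]
  have hψmul : ∀ a b : ι →₀ ℕ, φB (f (A.mul a b)) = φB (f a) * φB (f b) := fun a b => by
    rw [hmul, hφB.map_mul]
  have hψone : φB (f A.one) = 1 := by rw [hone, hφB.map_one]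
  have hψnn : ∀ a : ι →₀ ℕ, 0 ≤ φB (f a) := by
    intro a
    rw [addext_real φB hφB.map_add (f a)]
    exact Finset.sum_nonneg fun x _ => mul_nonneg (Nat.cast_nonneg _) (le_of_lt (hφB.pos x))
  have hψpos : ∀ k : ι, 0 < φB (f (Finsupp.single k 1)) := by
    intro k
    rcases (hψnn (Finsupp.single k 1)).lt_or_eq with h | h
    · exact h
    exfalso
    have hzero : ∀ j : ι, φB (f (Finsupp.single j 1)) = 0 := by
      intro j
      obtain ⟨v, hv⟩ := (hA k j).2
      have hm : φB (f (A.mul (Finsupp.single k 1) (Finsupp.single v 1))) = 0 := by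
        rw [hψmul, ← h]; ring
      rw [addext_real (fun a => φB (f a)) hψadd] at hm
      have hterm := (Finset.sum_eq_zero_iff_of_nonneg (fun k' (_ : k' ∈ Finset.univ) =>
        mul_nonneg (Nat.cast_nonneg _) (hψnn (Finsupp.single k' 1)))).mp hm j
        (Finset.mem_univ j)
      have hj1 : 1 ≤ A.mul (Finsupp.single k 1) (Finsupp.single v 1) j := by
        simpa using Finsupp.le_def.mp hv j
      rcases mul_eq_zero.mp hterm with h' | h'
      · have h'' := Nat.cast_eq_zero.mp h'
        omega
      · exact h'
    have h1 : (1 : ℝ) = 0 := by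
      rw [← hψone, addext_real (fun a => φB (f a)) hψadd A.one]
      simp [hzero]
    norm_num at h1
  -- Perron-Frobenius comparison of φA and φB ∘ f on simples
  have hfp : ∀ k : ι, φA (Finsupp.single k 1) = φB (f (Finsupp.single k 1)) := by
    obtain ⟨t, htpos, hteq⟩ := pf_prop (fun j k => ∑ i, (A.N i j k : ℝ)) (Mpos A hA)
      (fun k => φA (Finsupp.single k 1)) (fun k => φB (f (Finsupp.single k 1)))
      hφA.pos hψpos
      (∑ i, φA (Finsupp.single i 1)) (∑ i, φB (f (Finsupp.single i 1)))
      (fp_eigen A φA hφA.map_add hφA.map_mul)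
      (fp_eigen A (fun a => φB (f a)) hψadd hψmul)
    have hnormA : ∑ k, ((A.one k : ℝ)) * φA (Finsupp.single k 1) = 1 := by
      rw [← addext_real φA hφA.map_add A.one, hφA.map_one]
    have hnormB : ∑ k, ((A.one k : ℝ)) * φB (f (Finsupp.single k 1)) = 1 := by
      rw [← addext_real (fun a => φB (f a)) hψadd A.one, hψone]
    have ht1 : t = 1 := by
      have : ∑ k, ((A.one k : ℝ)) * φA (Finsupp.single k 1)
          = t * ∑ k, ((A.one k : ℝ)) * φB (f (Finsupp.single k 1)) := by
        rw [Finset.mul_sum]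
        exact Finset.sum_congr rfl fun k _ => by rw [hteq k]; ring
      rw [hnormA, hnormB] at this; rw [this]; ring
    intro k
    rw [hteq k, ht1]; ring
  have part1 : ∀ a, φB (f a) = φA a := by
    intro a
    rw [addext_real (fun a => φB (f a)) hψadd a, addext_real φA hφA.map_add a]
    exact Finset.sum_congr rfl fun k _ => by rw [hfp k]
  refine ⟨part1, ?_⟩
  intro hdom RA RB hRA hRB
  have hf0 : f 0 = 0 := by
    have h := hadd 0 0
    rw [add_zero] at h
    ext x
    have h2 := DFunLike.congr_fun h x
    rw [Finsupp.add_apply] at h2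
    simp only [Finsupp.coe_zero, Pi.zero_apply]
    omega
  have keyf : ∀ (b : ι →₀ ℕ) (k : κ), ((f b) k : ℝ)
      = ∑ i, (b i : ℝ) * ((f (Finsupp.single i 1)) k : ℝ) := by
    intro b k
    rw [addext f hf0 hadd b, Finsupp.finset_sum_apply]
    push_cast [Finsupp.smul_apply, smul_eq_mul]
    rfl
  have key1 : ∀ (x : κ) (b : κ →₀ ℕ) (k : κ),
      ∑ j, (b j : ℝ) * (B.N x j k : ℝ) = ((B.mul (Finsupp.single x 1) b) k : ℝ) := by
    intro x b k
    rw [mul_single_left_eval B x b k]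
    push_cast
    rfl
  have key2 : ∀ (c b : κ →₀ ℕ) (k : κ),
      ∑ x, (c x : ℝ) * ((B.mul (Finsupp.single x 1) b) k : ℝ) = ((B.mul c b) k : ℝ) := by
    intro c b k
    rw [B.mul_eval c b k]
    push_cast
    refine Finset.sum_congr rfl fun x _ => ?_
    rw [← key1 x b k, Finset.mul_sum]
    exact Finset.sum_congr rfl fun j _ => by ring
  have hRAe : ∀ (i' k' : ι),
      ∑ i, RA i * (A.N i' i k' : ℝ) = φA (Finsupp.single i' 1) * RA k' := by
    intro i' k'
    have h := congrFun (hRA.2 i') k'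
    rw [star_single A RA i' k'] at h
    simpa using h
  have hRBe : ∀ (x k : κ),
      ∑ j, RB j * (B.N x j k : ℝ) = φB (Finsupp.single x 1) * RB k := by
    intro x k
    have h := congrFun (hRB.2 x) k
    rw [star_single B RB x k] at h
    simpa using h
  have hgposs : ∀ x : κ, 0 < ∑ i : ι, ((f (Finsupp.single i 1)) x : ℝ) := by
    intro x
    obtain ⟨a, ha⟩ := hdom x
    have h1 : (1:ℝ) ≤ ((f a) x : ℝ) := by
      have h := Finsupp.le_def.mp ha x
      simp only [Finsupp.single_eq_same] at h
      exact_mod_cast h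
    rw [keyf a x] at h1
    have hex : ∃ i, 0 < ((f (Finsupp.single i 1)) x : ℝ) := by
      by_contra hc
      push_neg at hc
      have hz : ∀ i, ((f (Finsupp.single i 1)) x : ℝ) = 0 :=
        fun i => le_antisymm (hc i) (Nat.cast_nonneg _)
      simp [hz] at h1
      linarith
    obtain ⟨i0, hi0⟩ := hex
    exact Finset.sum_pos' (fun i _ => Nat.cast_nonneg _) ⟨i0, Finset.mem_univ _, hi0⟩
  have hSpos : ∀ x, 0 < linExt f RA x := by
    intro x
    have h := hgposs x
    have h2 : ∑ _i : ι, (0:ℝ) < ∑ i : ι, ((f (Finsupp.single i 1)) x : ℝ) := by simpa using h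
    obtain ⟨i0, -, hi0⟩ := Finset.exists_lt_of_sum_lt h2
    exact Finset.sum_pos' (fun i _ => mul_nonneg (hRA.1 i).le (Nat.cast_nonneg _))
      ⟨i0, Finset.mem_univ _, mul_pos (hRA.1 i0) hi0⟩
  have hlam : ∑ x, (∑ i : ι, ((f (Finsupp.single i 1)) x : ℝ)) * φB (Finsupp.single x 1)
      = ∑ i : ι, φA (Finsupp.single i 1) := by
    calc ∑ x, (∑ i : ι, ((f (Finsupp.single i 1)) x : ℝ)) * φB (Finsupp.single x 1)
        = ∑ x, ∑ i : ι, ((f (Finsupp.single i 1)) x : ℝ) * φB (Finsupp.single x 1) :=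
          Finset.sum_congr rfl fun x _ => Finset.sum_mul _ _ _
      _ = ∑ i : ι, ∑ x, ((f (Finsupp.single i 1)) x : ℝ) * φB (Finsupp.single x 1) :=
          Finset.sum_comm
      _ = ∑ i : ι, φB (f (Finsupp.single i 1)) :=
          Finset.sum_congr rfl fun i _ => (addext_real φB hφB.map_add _).symm
      _ = ∑ i : ι, φA (Finsupp.single i 1) := Finset.sum_congr rfl fun i _ => part1 _
  have hGpos : ∀ k j : κ,
      0 < ∑ x, (∑ i : ι, ((f (Finsupp.single i 1)) x : ℝ)) * (B.N x j k : ℝ) := by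
    intro k j
    obtain ⟨u, hu⟩ := (hB j k).1
    have h1 : 1 ≤ B.N u j k := by simpa [NSetAlgebra.N] using Finsupp.le_def.mp hu k
    refine Finset.sum_pos' (fun x _ => mul_nonneg (hgposs x).le (Nat.cast_nonneg _))
      ⟨u, Finset.mem_univ u, ?_⟩
    exact mul_pos (hgposs u) (by exact_mod_cast Nat.lt_of_lt_of_le Nat.zero_lt_one h1)
  have hGRB : ∀ k, ∑ j, (∑ x, (∑ i : ι, ((f (Finsupp.single i 1)) x : ℝ)) * (B.N x j k : ℝ)) * RB j
      = (∑ i : ι, φA (Finsupp.single i 1)) * RB k := by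
    intro k
    calc ∑ j, (∑ x, (∑ i : ι, ((f (Finsupp.single i 1)) x : ℝ)) * (B.N x j k : ℝ)) * RB j
        = ∑ j, ∑ x, (∑ i : ι, ((f (Finsupp.single i 1)) x : ℝ)) * (RB j * (B.N x j k : ℝ)) := by
          refine Finset.sum_congr rfl fun j _ => ?_
          rw [Finset.sum_mul]
          exact Finset.sum_congr rfl fun x _ => by ring
      _ = ∑ x, ∑ j, (∑ i : ι, ((f (Finsupp.single i 1)) x : ℝ)) * (RB j * (B.N x j k : ℝ)) :=
          Finset.sum_comm
      _ = ∑ x, (∑ i : ι, ((f (Finsupp.single i 1)) x : ℝ)) * (φB (Finsupp.single x 1) * RB k) := by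
          refine Finset.sum_congr rfl fun x _ => ?_
          rw [← Finset.mul_sum, hRBe x k]
      _ = (∑ x, (∑ i : ι, ((f (Finsupp.single i 1)) x : ℝ)) * φB (Finsupp.single x 1)) * RB k := by
          rw [Finset.sum_mul]
          exact Finset.sum_congr rfl fun x _ => by ring
      _ = (∑ i : ι, φA (Finsupp.single i 1)) * RB k := by rw [hlam]
  have inner1 : ∀ (x k : κ), ∑ j, linExt f RA j * (B.N x j k : ℝ)
      = ∑ i, RA i * ((B.mul (Finsupp.single x 1) (f (Finsupp.single i 1))) k : ℝ) := by
    intro x k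
    simp only [linExt]
    calc ∑ j, (∑ i, RA i * ((f (Finsupp.single i 1)) j : ℝ)) * (B.N x j k : ℝ)
        = ∑ j, ∑ i, RA i * (((f (Finsupp.single i 1)) j : ℝ) * (B.N x j k : ℝ)) := by
          refine Finset.sum_congr rfl fun j _ => ?_
          rw [Finset.sum_mul]
          exact Finset.sum_congr rfl fun i _ => by ring
      _ = ∑ i, ∑ j, RA i * (((f (Finsupp.single i 1)) j : ℝ) * (B.N x j k : ℝ)) :=
          Finset.sum_comm
      _ = ∑ i, RA i * ((B.mul (Finsupp.single x 1) (f (Finsupp.single i 1))) k : ℝ) := by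
          refine Finset.sum_congr rfl fun i _ => ?_
          rw [← Finset.mul_sum, key1 x _ k]
  have inner2 : ∀ (i : ι) (k : κ),
      ∑ x, (∑ i' : ι, ((f (Finsupp.single i' 1)) x : ℝ))
        * ((B.mul (Finsupp.single x 1) (f (Finsupp.single i 1))) k : ℝ)
      = ∑ i' : ι, ((f (A.mul (Finsupp.single i' 1) (Finsupp.single i 1))) k : ℝ) := by
    intro i k
    calc ∑ x, (∑ i' : ι, ((f (Finsupp.single i' 1)) x : ℝ))
          * ((B.mul (Finsupp.single x 1) (f (Finsupp.single i 1))) k : ℝ)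
        = ∑ x, ∑ i' : ι, ((f (Finsupp.single i' 1)) x : ℝ)
          * ((B.mul (Finsupp.single x 1) (f (Finsupp.single i 1))) k : ℝ) :=
          Finset.sum_congr rfl fun x _ => Finset.sum_mul _ _ _
      _ = ∑ i' : ι, ∑ x, ((f (Finsupp.single i' 1)) x : ℝ)
          * ((B.mul (Finsupp.single x 1) (f (Finsupp.single i 1))) k : ℝ) := Finset.sum_comm
      _ = ∑ i' : ι, ((B.mul (f (Finsupp.single i' 1)) (f (Finsupp.single i 1))) k : ℝ) :=
          Finset.sum_congr rfl fun i' _ => key2 _ _ k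
      _ = ∑ i' : ι, ((f (A.mul (Finsupp.single i' 1) (Finsupp.single i 1))) k : ℝ) := by
          refine Finset.sum_congr rfl fun i' _ => ?_
          rw [hmul]
  have hGS : ∀ k, ∑ j, (∑ x, (∑ i : ι, ((f (Finsupp.single i 1)) x : ℝ)) * (B.N x j k : ℝ))
        * linExt f RA j
      = (∑ i : ι, φA (Finsupp.single i 1)) * linExt f RA k := by
    intro k
    calc ∑ j, (∑ x, (∑ i : ι, ((f (Finsupp.single i 1)) x : ℝ)) * (B.N x j k : ℝ))
          * linExt f RA j
        = ∑ j, ∑ x, (∑ i : ι, ((f (Finsupp.single i 1)) x : ℝ))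
          * (linExt f RA j * (B.N x j k : ℝ)) := by
          refine Finset.sum_congr rfl fun j _ => ?_
          rw [Finset.sum_mul]
          exact Finset.sum_congr rfl fun x _ => by ring
      _ = ∑ x, ∑ j, (∑ i : ι, ((f (Finsupp.single i 1)) x : ℝ))
          * (linExt f RA j * (B.N x j k : ℝ)) := Finset.sum_comm
      _ = ∑ x, (∑ i : ι, ((f (Finsupp.single i 1)) x : ℝ))
          * (∑ i, RA i * ((B.mul (Finsupp.single x 1) (f (Finsupp.single i 1))) k : ℝ)) := by
          refine Finset.sum_congr rfl fun x _ => ?_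
          rw [← Finset.mul_sum, inner1 x k]
      _ = ∑ x, ∑ i, (∑ i' : ι, ((f (Finsupp.single i' 1)) x : ℝ))
          * (RA i * ((B.mul (Finsupp.single x 1) (f (Finsupp.single i 1))) k : ℝ)) :=
          Finset.sum_congr rfl fun x _ => Finset.mul_sum _ _ _
      _ = ∑ i, ∑ x, (∑ i' : ι, ((f (Finsupp.single i' 1)) x : ℝ))
          * (RA i * ((B.mul (Finsupp.single x 1) (f (Finsupp.single i 1))) k : ℝ)) :=
          Finset.sum_comm
      _ = ∑ i, RA i * (∑ x, (∑ i' : ι, ((f (Finsupp.single i' 1)) x : ℝ))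
          * ((B.mul (Finsupp.single x 1) (f (Finsupp.single i 1))) k : ℝ)) := by
          refine Finset.sum_congr rfl fun i _ => ?_
          rw [Finset.mul_sum]
          exact Finset.sum_congr rfl fun x _ => by ring
      _ = ∑ i, RA i * (∑ i' : ι, ((f (A.mul (Finsupp.single i' 1) (Finsupp.single i 1))) k : ℝ)) := by
          refine Finset.sum_congr rfl fun i _ => ?_
          rw [inner2 i k]
      _ = ∑ i, RA i * (∑ i' : ι, ∑ k' : ι, (A.N i' i k' : ℝ) * ((f (Finsupp.single k' 1)) k : ℝ)) := by
          refine Finset.sum_congr rfl fun i _ => ?_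
          have hstep : ∑ i' : ι, ((f (A.mul (Finsupp.single i' 1) (Finsupp.single i 1))) k : ℝ)
              = ∑ i' : ι, ∑ k' : ι, (A.N i' i k' : ℝ) * ((f (Finsupp.single k' 1)) k : ℝ) :=
            Finset.sum_congr rfl fun i' _ =>
              keyf (A.mul (Finsupp.single i' 1) (Finsupp.single i 1)) k
          rw [hstep]
      _ = ∑ i' : ι, ∑ k' : ι, ((f (Finsupp.single k' 1)) k : ℝ)
          * (∑ i, RA i * (A.N i' i k' : ℝ)) := by
          calc ∑ i, RA i * (∑ i' : ι, ∑ k' : ι, (A.N i' i k' : ℝ) * ((f (Finsupp.single k' 1)) k : ℝ))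
              = ∑ i, ∑ i' : ι, RA i * (∑ k' : ι, (A.N i' i k' : ℝ) * ((f (Finsupp.single k' 1)) k : ℝ)) :=
                Finset.sum_congr rfl fun i _ => Finset.mul_sum _ _ _
            _ = ∑ i' : ι, ∑ i, RA i * (∑ k' : ι, (A.N i' i k' : ℝ) * ((f (Finsupp.single k' 1)) k : ℝ)) :=
                Finset.sum_comm
            _ = ∑ i' : ι, ∑ i, ∑ k' : ι, RA i * ((A.N i' i k' : ℝ) * ((f (Finsupp.single k' 1)) k : ℝ)) :=
                Finset.sum_congr rfl fun i' _ => Finset.sum_congr rfl fun i _ => Finset.mul_sum _ _ _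
            _ = ∑ i' : ι, ∑ k' : ι, ∑ i, RA i * ((A.N i' i k' : ℝ) * ((f (Finsupp.single k' 1)) k : ℝ)) :=
                Finset.sum_congr rfl fun i' _ => Finset.sum_comm
            _ = ∑ i' : ι, ∑ k' : ι, ((f (Finsupp.single k' 1)) k : ℝ) * (∑ i, RA i * (A.N i' i k' : ℝ)) := by
                refine Finset.sum_congr rfl fun i' _ => Finset.sum_congr rfl fun k' _ => ?_
                rw [Finset.mul_sum]
                exact Finset.sum_congr rfl fun i _ => by ring
      _ = ∑ i' : ι, ∑ k' : ι, ((f (Finsupp.single k' 1)) k : ℝ)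
          * (φA (Finsupp.single i' 1) * RA k') := by
          refine Finset.sum_congr rfl fun i' _ => Finset.sum_congr rfl fun k' _ => ?_
          rw [hRAe i' k']
      _ = (∑ i : ι, φA (Finsupp.single i 1)) * linExt f RA k := by
          rw [Finset.sum_mul]
          refine Finset.sum_congr rfl fun i' _ => ?_
          simp only [linExt]
          rw [Finset.mul_sum]
          refine Finset.sum_congr rfl fun k' _ => ?_
          ring
  obtain ⟨t, htpos, hteq⟩ := pf_prop
    (fun k j => ∑ x, (∑ i : ι, ((f (Finsupp.single i 1)) x : ℝ)) * (B.N x j k : ℝ))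
    hGpos (linExt f RA) RB hSpos hRB.1
    (∑ i : ι, φA (Finsupp.single i 1)) (∑ i : ι, φA (Finsupp.single i 1)) hGS hGRB
  have hden : 0 < ∑ x, RB x * φB (Finsupp.single x 1) :=
    Finset.sum_pos (fun x _ => mul_pos (hRB.1 x) (hφB.pos x)) Finset.univ_nonempty
  have hnum : ∑ x, linExt f RA x * φB (Finsupp.single x 1)
      = ∑ i, RA i * φA (Finsupp.single i 1) := by
    calc ∑ x, linExt f RA x * φB (Finsupp.single x 1)
        = ∑ x, ∑ i, RA i * (((f (Finsupp.single i 1)) x : ℝ) * φB (Finsupp.single x 1)) := by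
          refine Finset.sum_congr rfl fun x _ => ?_
          simp only [linExt]
          rw [Finset.sum_mul]
          exact Finset.sum_congr rfl fun i _ => by ring
      _ = ∑ i, ∑ x, RA i * (((f (Finsupp.single i 1)) x : ℝ) * φB (Finsupp.single x 1)) :=
          Finset.sum_comm
      _ = ∑ i, RA i * φB (f (Finsupp.single i 1)) := by
          refine Finset.sum_congr rfl fun i _ => ?_
          rw [← Finset.mul_sum, ← addext_real φB hφB.map_add]
      _ = ∑ i, RA i * φA (Finsupp.single i 1) :=
          Finset.sum_congr rfl fun i _ => by rw [part1]
  have hnum2 : ∑ x, linExt f RA x * φB (Finsupp.single x 1)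
      = t * ∑ x, RB x * φB (Finsupp.single x 1) := by
    rw [Finset.mul_sum]
    exact Finset.sum_congr rfl fun x _ => by rw [hteq x]; ring
  have ht : t = (∑ i, RA i * φA (Finsupp.single i 1)) / (∑ x, RB x * φB (Finsupp.single x 1)) := by
    rw [eq_div_iff (ne_of_gt hden), ← hnum, hnum2]
  funext x
  rw [Pi.smul_apply, smul_eq_mul, ← ht, ← hteq x]
end

section
/- Let A = ι →₀ ℕ be a transitive finite-rank ℕSet algebra with Frobenius–Perron character φ_A. If there exists a map f : (ι →₀ ℕ) → ℕ that is additive, multiplicative and unital (a morphism of ℕSet algebras to the rank-one algebra ℕ), then φ_A(a) = f(a) for all a; in particular φ_A(a) is a natural number for every a ∈ ι →₀ ℕ. (This is the combinatorial content of the corollary: if a fusion category over K admits a tensor functor to Vec_K, then all Frobenius–Perron dimensions of its objects are natural numbers.) -/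
open Finsupp

section PFaux

variable {ι : Type*} [Fintype ι]

lemma additive_eq_sum' {M : Type*} [AddCancelCommMonoid M] (g : (ι →₀ ℕ) → M)
    (hg : ∀ a b, g (a + b) = g a + g b) (a : ι →₀ ℕ) :
    g a = ∑ k : ι, a k • g (Finsupp.single k 1) := by
  have h0 : g 0 = 0 := by
    have h := hg 0 0
    simp only [add_zero] at h
    exact (left_eq_add.mp h)
  induction a using Finsupp.induction with
  | zero => simp [h0]
  | single_add i b rest hi hb ih =>
    have hsingle : ∀ n : ℕ, g (Finsupp.single i n) = n • g (Finsupp.single i 1) := by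
      intro n
      induction n with
      | zero => simpa using h0
      | succ n ihn =>
        have hs : (Finsupp.single i (n + 1) : ι →₀ ℕ)
            = Finsupp.single i n + Finsupp.single i 1 := by
          rw [← Finsupp.single_add]
        rw [hs, hg, ihn, succ_nsmul]
    have hpt : ∀ k : ι, ((Finsupp.single i b + rest) k) • g (Finsupp.single k 1)
        = ((Finsupp.single i b) k) • g (Finsupp.single k 1)
          + (rest k) • g (Finsupp.single k 1) := by
      intro k
      simp [add_smul]
    rw [hg, ih, hsingle]
    rw [Finset.sum_congr rfl (fun k _ => hpt k), Finset.sum_add_distrib]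
    congr 1
    rw [Finset.sum_eq_single_of_mem i (Finset.mem_univ i)]
    · simp
    · intro k _ hk
      simp [Finsupp.single_apply, Ne.symm hk]

lemma pf_le [Nonempty ι] (M : ι → ι → ℝ) (hM : ∀ i k, 0 < M i k)
    (x y : ι → ℝ) (hx : ∀ i, 0 < x i) (hy : ∀ i, 0 < y i) (cx cy : ℝ)
    (hex : ∀ i, ∑ k, M i k * x k = cx * x i)
    (hey : ∀ i, ∑ k, M i k * y k = cy * y i) : cx ≤ cy := by
  obtain ⟨j0, -, hj0⟩ := Finset.exists_min_image Finset.univ (fun k => y k / x k)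
    Finset.univ_nonempty
  set t := y j0 / x j0 with ht
  have htpos : 0 < t := div_pos (hy j0) (hx j0)
  have hle : ∀ k, t * x k ≤ y k := by
    intro k
    have := hj0 k (Finset.mem_univ k)
    calc t * x k ≤ (y k / x k) * x k := by
          exact mul_le_mul_of_nonneg_right this (le_of_lt (hx k))
      _ = y k := div_mul_cancel₀ _ (ne_of_gt (hx k))
  have key : cx * y j0 ≤ cy * y j0 := by
    have h1 : ∑ k, M j0 k * (t * x k) ≤ ∑ k, M j0 k * y k :=
      Finset.sum_le_sum fun k _ =>
        mul_le_mul_of_nonneg_left (hle k) (le_of_lt (hM j0 k))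
    have h2 : ∑ k, M j0 k * (t * x k) = cx * y j0 := by
      have : ∑ k, M j0 k * (t * x k) = t * ∑ k, M j0 k * x k := by
        rw [Finset.mul_sum]; congr 1; ext k; ring
      have hty : t * x j0 = y j0 := div_mul_cancel₀ _ (ne_of_gt (hx j0))
      rw [this, hex j0, show t * (cx * x j0) = cx * (t * x j0) by ring, hty]
    rw [h2, hey j0] at h1
    exact h1
  exact le_of_mul_le_mul_right key (hy j0)

lemma pf_prop_s15 [Nonempty ι] (M : ι → ι → ℝ) (hM : ∀ i k, 0 < M i k)
    (x y : ι → ℝ) (hx : ∀ i, 0 < x i) (hy : ∀ i, 0 < y i) (cx cy : ℝ)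
    (hex : ∀ i, ∑ k, M i k * x k = cx * x i)
    (hey : ∀ i, ∑ k, M i k * y k = cy * y i) :
    ∃ t : ℝ, 0 < t ∧ ∀ k, y k = t * x k := by
  have hc : cx = cy :=
    le_antisymm (pf_le M hM x y hx hy cx cy hex hey)
      (pf_le M hM y x hy hx cy cx hey hex)
  obtain ⟨j0, -, hj0⟩ := Finset.exists_min_image Finset.univ (fun k => y k / x k)
    Finset.univ_nonempty
  set t := y j0 / x j0 with ht
  have htpos : 0 < t := div_pos (hy j0) (hx j0)
  have hle : ∀ k, t * x k ≤ y k := by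
    intro k
    have := hj0 k (Finset.mem_univ k)
    calc t * x k ≤ (y k / x k) * x k :=
          mul_le_mul_of_nonneg_right this (le_of_lt (hx k))
      _ = y k := div_mul_cancel₀ _ (ne_of_gt (hx k))
  refine ⟨t, htpos, fun k => ?_⟩
  have hsum0 : ∑ k, M j0 k * (y k - t * x k) = 0 := by
    have hexp : ∑ k, M j0 k * (y k - t * x k)
        = (∑ k, M j0 k * y k) - t * ∑ k, M j0 k * x k := by
      rw [Finset.mul_sum, ← Finset.sum_sub_distrib]
      congr 1; ext k; ring
    rw [hexp, hex j0, hey j0, ← hc]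
    have hty : t * x j0 = y j0 := by
      rw [ht, div_mul_cancel₀ _ (ne_of_gt (hx j0))]
    rw [show cx * y j0 - t * (cx * x j0) = cx * (y j0 - t * x j0) by ring, hty]
    ring
  have hzero : ∀ k ∈ Finset.univ, M j0 k * (y k - t * x k) = 0 := by
    rw [← Finset.sum_eq_zero_iff_of_nonneg]
    · exact hsum0
    · intro k _
      exact mul_nonneg (le_of_lt (hM j0 k)) (by linarith [hle k])
  have := hzero k (Finset.mem_univ k)
  rcases mul_eq_zero.mp this with h | h
  · exact absurd h (ne_of_gt (hM j0 k))
  · linarith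

end PFaux

open NSetAlgebra in
/-- If a transitive finite-rank ℕSet algebra admits a morphism to the rank-one
algebra `ℕ`, then its FP character agrees with that morphism; in particular all FP
dimensions are natural numbers. -/
theorem stmt15 {ι : Type*} [Fintype ι] [Nonempty ι]
    (A : NSetAlgebra ι) (hA : A.Transitive)
    (φ : (ι →₀ ℕ) → ℝ) (hφ : A.IsFPCharacter φ)
    (f : (ι →₀ ℕ) → ℕ)
    (hadd : ∀ a b, f (a + b) = f a + f b)
    (hmul : ∀ a b, f (A.mul a b) = f a * f b)
    (hone : f A.one = 1) :
    ∀ a : ι →₀ ℕ, φ a = (f a : ℝ) := by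
  classical
  set x : ι → ℝ := fun i => φ (Finsupp.single i 1) with hxdef
  set y : ι → ℝ := fun i => (f (Finsupp.single i 1) : ℝ) with hydef
  have φsum : ∀ a : ι →₀ ℕ, φ a = ∑ k : ι, (a k : ℝ) * x k := by
    intro a
    rw [additive_eq_sum' φ hφ.map_add a]
    exact Finset.sum_congr rfl fun k _ => by rw [nsmul_eq_mul]
  have fsum : ∀ a : ι →₀ ℕ, (f a : ℝ) = ∑ k : ι, (a k : ℝ) * y k := by
    intro a
    rw [additive_eq_sum' f hadd a]
    push_cast [smul_eq_mul]
    rfl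
  have hx : ∀ i, 0 < x i := hφ.pos
  have fmono : ∀ a b : ι →₀ ℕ, a ≤ b → f a ≤ f b := by
    intro a b hab
    obtain ⟨c, rfl⟩ := le_iff_exists_add.mp hab
    rw [hadd]; exact Nat.le_add_right _ _
  have hy : ∀ i, 0 < y i := by
    have hone' : (∑ k : ι, A.one k * f (Finsupp.single k 1)) = 1 := by
      have := additive_eq_sum' f hadd A.one
      rw [hone] at this
      simpa [smul_eq_mul] using this.symm
    obtain ⟨k0, -, hk0⟩ := Finset.exists_ne_zero_of_sum_ne_zero
      (f := fun k => A.one k * f (Finsupp.single k 1)) (s := Finset.univ)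
      (by rw [hone']; exact one_ne_zero)
    have hfk0 : 0 < f (Finsupp.single k0 1) := Nat.pos_of_ne_zero (by
      intro h; rw [h, Nat.mul_zero] at hk0; exact hk0 rfl)
    intro i
    obtain ⟨u, hu⟩ := (hA i k0).1
    have h1 : f (Finsupp.single k0 1) ≤ f (A.mul (Finsupp.single u 1) (Finsupp.single i 1)) :=
      fmono _ _ hu
    rw [hmul] at h1
    have h2 : 0 < f (Finsupp.single u 1) * f (Finsupp.single i 1) := lt_of_lt_of_le hfk0 h1
    have h3 : 0 < f (Finsupp.single i 1) := Nat.pos_of_ne_zero (by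
      intro h; rw [h, Nat.mul_zero] at h2; exact lt_irrefl 0 h2)
    simpa [hydef] using (Nat.cast_pos (α := ℝ)).mpr h3
  -- structure constants expansions
  have eigx : ∀ i j : ι, ∑ k : ι, (A.N i j k : ℝ) * x k = x i * x j := by
    intro i j
    have := hφ.map_mul (Finsupp.single i 1) (Finsupp.single j 1)
    rw [φsum (A.mul (Finsupp.single i 1) (Finsupp.single j 1))] at this
    exact this
  have eigy : ∀ i j : ι, ∑ k : ι, (A.N i j k : ℝ) * y k = y i * y j := by
    intro i j
    have h := hmul (Finsupp.single i 1) (Finsupp.single j 1)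
    have h2 : (f (A.mul (Finsupp.single i 1) (Finsupp.single j 1)) : ℝ) = y i * y j := by
      rw [h]; push_cast; rfl
    rw [fsum (A.mul (Finsupp.single i 1) (Finsupp.single j 1))] at h2
    exact h2
  set M : ι → ι → ℝ := fun i k => ∑ u : ι, (A.N u i k : ℝ) with hMdef
  have hM : ∀ i k, 0 < M i k := by
    intro i k
    obtain ⟨u, hu⟩ := (hA i k).1
    have h1 : (1 : ℕ) ≤ A.N u i k := by
      have := hu k
      simpa [NSetAlgebra.N, Finsupp.single_apply] using this
    refine Finset.sum_pos' (fun v _ => by positivity) ⟨u, Finset.mem_univ u, ?_⟩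
    exact_mod_cast Nat.lt_of_lt_of_le Nat.zero_lt_one h1
  have hex : ∀ i, ∑ k, M i k * x k = (∑ u : ι, x u) * x i := by
    intro i
    simp only [hMdef, Finset.sum_mul]
    rw [Finset.sum_comm]
    exact Finset.sum_congr rfl fun u _ => eigx u i
  have hey : ∀ i, ∑ k, M i k * y k = (∑ u : ι, y u) * y i := by
    intro i
    simp only [hMdef, Finset.sum_mul]
    rw [Finset.sum_comm]
    exact Finset.sum_congr rfl fun u _ => eigy u i
  obtain ⟨t, htpos, hty⟩ := pf_prop_s15 M hM x y hx hy _ _ hex hey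
  have hφone : (∑ k : ι, (A.one k : ℝ) * x k) = 1 := by
    rw [← φsum, hφ.map_one]
  have hfone : (∑ k : ι, (A.one k : ℝ) * y k) = 1 := by
    rw [← fsum, hone, Nat.cast_one]
  have ht1 : t = 1 := by
    have : (∑ k : ι, (A.one k : ℝ) * y k) = t * ∑ k : ι, (A.one k : ℝ) * x k := by
      rw [Finset.mul_sum]
      exact Finset.sum_congr rfl fun k _ => by rw [hty k]; ring
    rw [hfone, hφone, _root_.mul_one] at this
    exact this.symm
  intro a
  rw [φsum a, fsum a]
  exact Finset.sum_congr rfl fun k _ => by rw [hty k, ht1, _root_.one_mul]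
end

section
/- Let K be a field, let A be a finite-dimensional separable K-algebra, and let M be a simple left A-module. Then the endomorphism algebra End_A(M) (a finite-dimensional division algebra over K by Schur's lemma) is a separable K-algebra. -/
open scoped TensorProduct

/-- A separable `K`-algebra: there is a `K`-linear splitting `θ : A → A ⊗[K] A` of the
multiplication map that is a homomorphism of `A`-bimodules, i.e. `μ ∘ θ = id` and
`θ(a b c) = a · θ(b) · c`, where `a · (x ⊗ y) · c = (a x) ⊗ (y c)`. -/
def IsSeparableKAlgebra (K A : Type*) [CommRing K] [Ring A] [Algebra K A] : Prop :=
  ∃ θ : A →ₗ[K] A ⊗[K] A,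
    (∀ a : A, LinearMap.mul' K A (θ a) = a) ∧
    (∀ a b c : A, θ (a * b * c) =
      TensorProduct.map (LinearMap.mulLeft K a) (LinearMap.mulRight K c) (θ b))

set_option linter.unusedSectionVars false
set_option maxHeartbeats 1000000

section Aux

variable {K A M : Type*} [Field K] [Ring A] [Algebra K A]
  [AddCommGroup M] [Module K M] [Module A M]
  [IsScalarTower K A M] [SMulCommClass A K M]

/-- Auxiliary "rank-one-type" `A`-linear endomorphism `n ↦ (σ n * c) • m`. -/
noncomputable def dmE (σ : M →ₗ[K] A) (hσ : ∀ (a : A) (n : M), σ (a • n) = a * σ n)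
    (c : A) (m : M) : Module.End A M where
  toFun n := (σ n * c) • m
  map_add' n₁ n₂ := by simp [add_mul, add_smul]
  map_smul' a n := by
    simp only [RingHom.id_apply, hσ]
    rw [mul_assoc, mul_smul]

variable (σ : M →ₗ[K] A) (hσ : ∀ (a : A) (n : M), σ (a • n) = a * σ n)

lemma dmE_apply (c : A) (m n : M) : dmE σ hσ c m n = (σ n * c) • m := rfl

lemma dmE_add_c (c c' : A) (m : M) :
    dmE σ hσ (c + c') m = dmE σ hσ c m + dmE σ hσ c' m := by
  ext n; simp [dmE_apply, mul_add, add_smul]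

lemma dmE_smul_c (k : K) (c : A) (m : M) :
    dmE σ hσ (k • c) m = k • dmE σ hσ c m := by
  ext n
  simp only [dmE_apply, LinearMap.smul_apply, Algebra.mul_smul_comm]
  rw [smul_assoc]

lemma dmE_add_m (c : A) (m m' : M) :
    dmE σ hσ c (m + m') = dmE σ hσ c m + dmE σ hσ c m' := by
  ext n; simp [dmE_apply, smul_add]

lemma dmE_smul_m (k : K) (c : A) (m : M) :
    dmE σ hσ c (k • m) = k • dmE σ hσ c m := by
  ext n
  simp only [dmE_apply, LinearMap.smul_apply]
  rw [smul_comm]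

lemma dmE_Asmul (c a : A) (m : M) :
    dmE σ hσ c (a • m) = dmE σ hσ (c * a) m := by
  ext n
  simp only [dmE_apply]
  rw [smul_smul, mul_assoc]

lemma mul_dmE (d : Module.End A M) (c : A) (m : M) :
    d * dmE σ hσ c m = dmE σ hσ c (d m) := by
  ext n
  simp [Module.End.mul_apply, dmE_apply]

lemma dmE_mul (m0 : M) (hσ2 : ∀ n : M, σ n • m0 = n) (d : Module.End A M) (c : A) (m : M) :
    dmE σ hσ c m * d = dmE σ hσ (σ (d m0) * c) m := by
  ext n
  have h1 : d n = σ n • d m0 := by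
    conv_lhs => rw [← hσ2 n]
    exact map_smul d _ _
  simp only [Module.End.mul_apply, dmE_apply, h1, hσ]
  rw [mul_assoc]

lemma dmE_comp (m0 : M) (c : A) (m' : M) :
    dmE σ hσ c m0 * dmE σ hσ 1 m' = dmE σ hσ (σ m' * c) m0 := by
  ext n
  simp only [Module.End.mul_apply, dmE_apply, mul_one, hσ]
  rw [mul_assoc]

lemma e_shift {V : Type*} [AddCommGroup V] [Module K V]
    {e : A ⊗[K] A}
    (he : ∀ b : A, TensorProduct.map (LinearMap.mulLeft K b) LinearMap.id e
        = TensorProduct.map LinearMap.id (LinearMap.mulRight K b) e)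
    {S : Finset (A × A)} (hS : e = ∑ p ∈ S, p.1 ⊗ₜ[K] p.2)
    (F : A →ₗ[K] A →ₗ[K] V) (b : A) :
    ∑ p ∈ S, F (b * p.1) p.2 = ∑ p ∈ S, F p.1 (p.2 * b) := by
  have h := congrArg (TensorProduct.lift F) (he b)
  rw [hS] at h
  simpa [map_sum, TensorProduct.lift.tmul] using h

end Aux

/-- For a finite-dimensional separable `K`-algebra `A` and a simple left `A`-module `M`,
the endomorphism algebra `End_A(M)` is a separable `K`-algebra. -/
theorem stmt18 (K A : Type*) [Field K] [Ring A] [Algebra K A] [FiniteDimensional K A]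
    (hA : IsSeparableKAlgebra K A)
    (M : Type*) [AddCommGroup M] [Module K M] [Module A M]
    [IsScalarTower K A M] [SMulCommClass A K M]
    [IsSimpleModule A M] :
    IsSeparableKAlgebra K (Module.End A M) := by
  classical
  obtain ⟨Θ, hΘ1, hΘ2⟩ := hA
  set e : A ⊗[K] A := Θ 1 with he_def
  have E1 : LinearMap.mul' K A e = 1 := hΘ1 1
  have E2 : ∀ b : A, TensorProduct.map (LinearMap.mulLeft K b) LinearMap.id e
      = TensorProduct.map LinearMap.id (LinearMap.mulRight K b) e := by
    intro b
    have h1 := hΘ2 b 1 1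
    have h2 := hΘ2 1 1 b
    rw [mul_one, mul_one, LinearMap.mulRight_one] at h1
    rw [one_mul, one_mul, LinearMap.mulLeft_one] at h2
    rw [← h1, ← h2]
  obtain ⟨S, hS⟩ := TensorProduct.exists_finset e
  have F1 : ∑ p ∈ S, p.1 * p.2 = 1 := by
    have h := congrArg (LinearMap.mul' K A) hS
    rw [E1] at h
    simpa [map_sum] using h.symm
  -- a nonzero vector
  have : Nontrivial M := IsSimpleModule.nontrivial A M
  obtain ⟨m0, hm0⟩ := exists_ne (0 : M)
  set q : A →ₗ[A] M := LinearMap.toSpanSingleton A M m0 with hq_def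
  have hq_apply : ∀ a : A, q a = a • m0 := fun a => rfl
  have hqsurj : LinearMap.range q = ⊤ := by
    rcases eq_bot_or_eq_top (LinearMap.range q) with h | h
    · exfalso
      apply hm0
      have hmem : q 1 ∈ LinearMap.range q := LinearMap.mem_range_self q 1
      rw [h] at hmem
      have : q 1 = 0 := by simpa using hmem
      simpa [hq_apply] using this
    · exact h
  obtain ⟨s, hs⟩ := (q.restrictScalars K).exists_rightInverse_of_surjective
    (by rw [LinearMap.range_eq_top] at hqsurj ⊢; exact hqsurj)
  have hs' : ∀ n : M, s n • m0 = n := by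
    intro n
    have := congrArg (fun f => f n) hs
    simpa [hq_apply] using this
  -- K-linear projection onto the kernel of q
  set mK : Submodule K A := (LinearMap.ker q).restrictScalars K with hmK_def
  obtain ⟨cK, hcK⟩ := Submodule.exists_isCompl mK
  set π₀ : A →ₗ[K] A := mK.subtype ∘ₗ (mK.projectionOnto cK hcK) with hπ₀_def
  have hπ₀fix : ∀ v, v ∈ LinearMap.ker q → π₀ v = v := by
    intro v hv
    have hv' : v ∈ mK := by simpa [hmK_def] using hv
    have h := Submodule.linearProjOfIsCompl_apply_left hcK ⟨v, hv'⟩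
    simp only [hπ₀_def, LinearMap.comp_apply]
    rw [show v = ((⟨v, hv'⟩ : mK) : A) from rfl, h]
    rfl
  have hπ₀mem : ∀ v, π₀ v ∈ LinearMap.ker q := by
    intro v
    have := (mK.projectionOnto cK hcK v).2
    exact this
  -- averaged A-linear projection onto ker q
  set π : A →ₗ[K] A :=
    ∑ p ∈ S, (LinearMap.mulLeft K p.1) ∘ₗ π₀ ∘ₗ (LinearMap.mulLeft K p.2) with hπ_def
  have hπ_apply : ∀ v, π v = ∑ p ∈ S, p.1 * π₀ (p.2 * v) := by
    intro v
    simp [hπ_def, LinearMap.sum_apply]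
  have hπA : ∀ (a v : A), π (a * v) = a * π v := by
    intro a v
    have h := e_shift (K := K) E2 hS
      (LinearMap.mk₂ K (fun u w => u * π₀ (w * v))
        (fun u u' w => by simp [add_mul])
        (fun k u w => by simp [smul_mul_assoc])
        (fun u w w' => by simp [add_mul, mul_add])
        (fun k u w => by simp [smul_mul_assoc, mul_smul_comm])) a
    simp only [LinearMap.mk₂_apply] at h
    rw [hπ_apply, hπ_apply, Finset.mul_sum]
    calc ∑ p ∈ S, p.1 * π₀ (p.2 * (a * v))
        = ∑ p ∈ S, p.1 * π₀ ((p.2 * a) * v) := by simp_rw [mul_assoc]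
      _ = ∑ p ∈ S, (a * p.1) * π₀ (p.2 * v) := h.symm
      _ = ∑ p ∈ S, a * (p.1 * π₀ (p.2 * v)) := by simp_rw [mul_assoc]
  have hπmem : ∀ v, π v ∈ LinearMap.ker q := by
    intro v
    rw [hπ_apply]
    refine Submodule.sum_mem _ fun p _ => ?_
    simpa [smul_eq_mul] using Submodule.smul_mem _ p.1 (hπ₀mem (p.2 * v))
  have hπfix : ∀ v, v ∈ LinearMap.ker q → π v = v := by
    intro v hv
    rw [hπ_apply]
    have hterm : ∀ p ∈ S, p.1 * π₀ (p.2 * v) = (p.1 * p.2) * v := by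
      intro p _
      rw [hπ₀fix _ (by simpa [smul_eq_mul] using Submodule.smul_mem _ p.2 hv), mul_assoc]
    rw [Finset.sum_congr rfl hterm, ← Finset.sum_mul, F1, one_mul]
  -- the A-linear section σ of q
  set σ : M →ₗ[K] A := (LinearMap.id - π) ∘ₗ s with hσ_def
  have hσ_apply : ∀ n, σ n = s n - π (s n) := fun n => rfl
  have hσ2 : ∀ n : M, σ n • m0 = n := by
    intro n
    rw [hσ_apply, sub_smul, hs']
    have h0 : π (s n) • m0 = 0 := by
      have := LinearMap.mem_ker.mp (hπmem (s n))
      simpa [hq_apply] using this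
    rw [h0, sub_zero]
  have hσA : ∀ (a : A) (n : M), σ (a • n) = a * σ n := by
    intro a n
    have h1 : q (s (a • n)) = a • n := by
      have := congrArg (fun f => f (a • n)) hs
      simpa using this
    have h2 : q (a * s n) = a • n := by
      rw [hq_apply, mul_smul, hs']
    have hw : s (a • n) - a * s n ∈ LinearMap.ker q := by
      rw [LinearMap.mem_ker, map_sub, h1, h2, sub_self]
    have key : π (s (a • n)) = (s (a • n) - a * s n) + a * π (s n) := by
      calc π (s (a • n)) = π ((s (a • n) - a * s n) + a * s n) := by
            rw [sub_add_cancel]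
        _ = π (s (a • n) - a * s n) + π (a * s n) := map_add _ _ _
        _ = (s (a • n) - a * s n) + a * π (s n) := by rw [hπfix _ hw, hπA]
    rw [hσ_apply, hσ_apply, key, mul_sub]
    abel
  -- the trace "ideal" I = range Φ
  set Φ : M ⊗[K] A →ₗ[K] A := TensorProduct.lift
    (LinearMap.mk₂ K (fun m a => σ m * a)
      (fun m m' a => by simp [add_mul])
      (fun k m a => by simp [smul_mul_assoc])
      (fun m a a' => by simp [mul_add])
      (fun k m a => by simp [mul_smul_comm])) with hΦ_def
  have hΦ_tmul : ∀ (m : M) (a : A), Φ (m ⊗ₜ[K] a) = σ m * a := fun m a => rfl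
  have hIK_left : ∀ (a x : A), x ∈ LinearMap.range Φ → a * x ∈ LinearMap.range Φ := by
    rintro a x ⟨t, rfl⟩
    refine ⟨TensorProduct.map (DistribMulAction.toLinearMap K M a) LinearMap.id t, ?_⟩
    induction t using TensorProduct.induction_on with
    | zero => simp
    | tmul m x =>
      simp [hΦ_tmul, hσA, mul_assoc]
      rw [show (DistribMulAction.toLinearMap K M a) m = a • m from rfl, hσA, mul_assoc]
    | add t₁ t₂ h₁ h₂ => simp only [map_add, h₁, h₂, mul_add]
  have hIK_right : ∀ (a x : A), x ∈ LinearMap.range Φ → x * a ∈ LinearMap.range Φ := by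
    rintro a x ⟨t, rfl⟩
    refine ⟨TensorProduct.map LinearMap.id (LinearMap.mulRight K a) t, ?_⟩
    induction t using TensorProduct.induction_on with
    | zero => simp
    | tmul m x => simp [hΦ_tmul, mul_assoc]
    | add t₁ t₂ h₁ h₂ => simp only [map_add, h₁, h₂, add_mul]
  -- K-linear projection onto range Φ
  obtain ⟨cK2, hcK2⟩ := Submodule.exists_isCompl (LinearMap.range Φ)
  set Q₀ : A →ₗ[K] A := (LinearMap.range Φ).subtype ∘ₗ
    ((LinearMap.range Φ).projectionOnto cK2 hcK2) with hQ₀_def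
  have hQ₀fix : ∀ v ∈ LinearMap.range Φ, Q₀ v = v := by
    intro v hv
    have h := Submodule.linearProjOfIsCompl_apply_left hcK2 ⟨v, hv⟩
    simp only [hQ₀_def, LinearMap.comp_apply]
    rw [show v = ((⟨v, hv⟩ : LinearMap.range Φ) : A) from rfl, h]
    rfl
  have hQ₀mem : ∀ v, Q₀ v ∈ LinearMap.range Φ :=
    fun v => ((LinearMap.range Φ).projectionOnto cK2 hcK2 v).2
  -- the two-sided averaged projection
  set Pi : A →ₗ[K] A := ∑ p ∈ S, ∑ r ∈ S,
    (LinearMap.mulLeft K p.1) ∘ₗ (LinearMap.mulRight K r.2) ∘ₗ Q₀ ∘ₗ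
      (LinearMap.mulLeft K p.2) ∘ₗ (LinearMap.mulRight K r.1) with hPi_def
  have hPi_apply : ∀ v, Pi v = ∑ p ∈ S, ∑ r ∈ S, p.1 * (Q₀ (p.2 * (v * r.1)) * r.2) := by
    intro v
    simp [hPi_def, LinearMap.sum_apply]
  have hPiright : ∀ (c a : A), Pi (c * a) = Pi c * a := by
    intro c a
    rw [hPi_apply, hPi_apply, Finset.sum_mul]
    refine Finset.sum_congr rfl fun p _ => ?_
    rw [Finset.sum_mul]
    have h := e_shift (K := K) E2 hS
      (LinearMap.mk₂ K (fun u w => p.1 * (Q₀ (p.2 * (c * u)) * w))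
        (fun u u' w => by simp [mul_add, add_mul])
        (fun k u w => by simp [mul_smul_comm, smul_mul_assoc])
        (fun u w w' => by simp [mul_add])
        (fun k u w => by simp [mul_smul_comm])) a
    simp only [LinearMap.mk₂_apply] at h
    calc ∑ r ∈ S, p.1 * (Q₀ (p.2 * ((c * a) * r.1)) * r.2)
        = ∑ r ∈ S, p.1 * (Q₀ (p.2 * (c * (a * r.1))) * r.2) := by simp_rw [mul_assoc]
      _ = ∑ r ∈ S, p.1 * (Q₀ (p.2 * (c * r.1)) * (r.2 * a)) := h
      _ = ∑ r ∈ S, p.1 * (Q₀ (p.2 * (c * r.1)) * r.2) * a := by simp_rw [mul_assoc]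
  have hPimem : ∀ c, Pi c ∈ LinearMap.range Φ := by
    intro c
    rw [hPi_apply]
    exact Submodule.sum_mem _ fun p _ => Submodule.sum_mem _ fun r _ =>
      hIK_left _ _ (hIK_right _ _ (hQ₀mem _))
  have hPifix : ∀ c ∈ LinearMap.range Φ, Pi c = c := by
    intro c hc
    rw [hPi_apply]
    have hterm : ∀ p ∈ S, ∀ r ∈ S, p.1 * (Q₀ (p.2 * (c * r.1)) * r.2)
        = (p.1 * p.2) * (c * (r.1 * r.2)) := by
      intro p _ r _
      rw [hQ₀fix _ (hIK_left _ _ (hIK_right _ _ hc))]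
      simp_rw [mul_assoc]
    rw [Finset.sum_congr rfl fun p hp => Finset.sum_congr rfl (hterm p hp)]
    have hinner : ∀ p ∈ S, ∑ r ∈ S, (p.1 * p.2) * (c * (r.1 * r.2)) = (p.1 * p.2) * c := by
      intro p _
      rw [← Finset.mul_sum, ← Finset.mul_sum, F1, mul_one]
    rw [Finset.sum_congr rfl hinner, ← Finset.sum_mul, F1, one_mul]
  -- the element ε acting as the identity on M
  set ε : A := Pi 1 with hε_def
  have hεIK : ε ∈ LinearMap.range Φ := hPimem 1
  have hρε : ∀ m : M, ε • m = m := by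
    intro m
    have hσmIK : σ m ∈ LinearMap.range Φ := ⟨m ⊗ₜ[K] 1, by rw [hΦ_tmul, mul_one]⟩
    have h1 : (1 - ε) * σ m ∈ LinearMap.range Φ := hIK_left _ _ hσmIK
    have hj : Pi (1 - ε) = 0 := by rw [map_sub, hPifix ε hεIK, ← hε_def, sub_self]
    have h3 : (1 - ε) * σ m = 0 := by rw [← hPifix _ h1, hPiright, hj, zero_mul]
    have h4 : (1 - ε) • m = 0 := by
      calc (1 - ε) • m = (1 - ε) • (σ m • m0) := by rw [hσ2]
        _ = ((1 - ε) * σ m) • m0 := (mul_smul _ _ _).symm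
        _ = 0 := by rw [h3, zero_smul]
    have h5 := sub_smul (1 : A) ε m
    rw [h4, one_smul] at h5
    exact (sub_eq_zero.mp h5.symm).symm
  -- a finite representation of ε
  obtain ⟨t₀, ht₀⟩ := hεIK
  obtain ⟨S', hS'⟩ := TensorProduct.exists_finset t₀
  have hε_sum : ∑ r ∈ S', σ r.1 * r.2 = ε := by
    rw [← ht₀, hS', map_sum]
    simp [hΦ_tmul]
  -- the separability element for the endomorphism algebra
  set ED : Module.End A M ⊗[K] Module.End A M :=
    ∑ r ∈ S', ∑ p ∈ S, dmE σ hσA (r.2 * p.2) m0 ⊗ₜ[K] dmE σ hσA 1 (p.1 • r.1) with hED_def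
  have Goal1 : LinearMap.mul' K (Module.End A M) ED = 1 := by
    have hED : LinearMap.mul' K (Module.End A M) ED
        = ∑ r ∈ S', ∑ p ∈ S, dmE σ hσA (p.1 * σ r.1 * (r.2 * p.2)) m0 := by
      rw [hED_def, map_sum]
      refine Finset.sum_congr rfl fun r _ => ?_
      rw [map_sum]
      refine Finset.sum_congr rfl fun p _ => ?_
      rw [LinearMap.mul'_apply, dmE_comp σ hσA m0, hσA]
    rw [hED]
    ext n
    simp only [LinearMap.sum_apply, dmE_apply, Module.End.one_apply]
    calc ∑ r ∈ S', ∑ p ∈ S, (σ n * (p.1 * σ r.1 * (r.2 * p.2))) • m0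
        = ∑ p ∈ S, ∑ r ∈ S', σ n • (p.1 • ((σ r.1 * r.2) • (p.2 • m0))) := by
          rw [Finset.sum_comm]
          refine Finset.sum_congr rfl fun p _ => Finset.sum_congr rfl fun r _ => ?_
          simp_rw [mul_assoc, mul_smul]
      _ = ∑ p ∈ S, σ n • (p.1 • ((∑ r ∈ S', (σ r.1 * r.2)) • (p.2 • m0))) := by
          refine Finset.sum_congr rfl fun p _ => ?_
          rw [← Finset.smul_sum, ← Finset.smul_sum, Finset.sum_smul]
      _ = ∑ p ∈ S, σ n • ((p.1 * p.2) • m0) := by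
          refine Finset.sum_congr rfl fun p _ => ?_
          rw [hε_sum, hρε]
          simp [mul_smul]
      _ = σ n • ((∑ p ∈ S, p.1 * p.2) • m0) := by
          rw [← Finset.smul_sum, Finset.sum_smul]
      _ = n := by rw [F1, one_smul, hσ2]
  have Goal2 : ∀ d : Module.End A M,
      TensorProduct.map (LinearMap.mulLeft K d) LinearMap.id ED
        = TensorProduct.map LinearMap.id (LinearMap.mulRight K d) ED := by
    intro d
    set b : A := σ (d m0) with hb_def
    have hdm0 : d m0 = b • m0 := (hσ2 (d m0)).symm
    have hlhs : TensorProduct.map (LinearMap.mulLeft K d) LinearMap.id ED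
        = ∑ r ∈ S', ∑ p ∈ S, dmE σ hσA (r.2 * (p.2 * b)) m0 ⊗ₜ[K] dmE σ hσA p.1 r.1 := by
      rw [hED_def, map_sum]
      refine Finset.sum_congr rfl fun r _ => ?_
      rw [map_sum]
      refine Finset.sum_congr rfl fun p _ => ?_
      rw [TensorProduct.map_tmul, LinearMap.mulLeft_apply, LinearMap.id_coe, id_eq,
        mul_dmE, hdm0, dmE_Asmul σ hσA (r.2 * p.2) b m0, dmE_Asmul σ hσA 1 p.1 r.1,
        mul_assoc, one_mul]
    have hrhs : TensorProduct.map LinearMap.id (LinearMap.mulRight K d) ED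
        = ∑ r ∈ S', ∑ p ∈ S, dmE σ hσA (r.2 * p.2) m0 ⊗ₜ[K] dmE σ hσA (b * p.1) r.1 := by
      rw [hED_def, map_sum]
      refine Finset.sum_congr rfl fun r _ => ?_
      rw [map_sum]
      refine Finset.sum_congr rfl fun p _ => ?_
      rw [TensorProduct.map_tmul, LinearMap.mulRight_apply, LinearMap.id_coe, id_eq,
        dmE_mul σ hσA m0 hσ2, mul_one, dmE_Asmul σ hσA b p.1 r.1]
    rw [hlhs, hrhs]
    refine Finset.sum_congr rfl fun r _ => ?_
    have h := e_shift (K := K) E2 hS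
      (LinearMap.mk₂ K (fun u w => dmE σ hσA (r.2 * w) m0 ⊗ₜ[K] dmE σ hσA u r.1)
        (fun u u' w => by simp [dmE_add_c σ hσA, TensorProduct.tmul_add])
        (fun k u w => by simp [dmE_smul_c σ hσA, TensorProduct.tmul_smul])
        (fun u w w' => by simp [mul_add, dmE_add_c σ hσA, TensorProduct.add_tmul])
        (fun k u w => by simp [mul_smul_comm, dmE_smul_c σ hσA, TensorProduct.smul_tmul'])) b
    exact h.symm
  -- assemble the splitting
  refine ⟨{ toFun := fun d => TensorProduct.map (LinearMap.mulLeft K d) LinearMap.id ED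
            map_add' := ?_
            map_smul' := ?_ }, ?_, ?_⟩
  · intro d d'
    have hml : LinearMap.mulLeft K (d + d')
        = LinearMap.mulLeft K d + LinearMap.mulLeft K d' := by
      ext x; simp [add_mul]
    show TensorProduct.map (LinearMap.mulLeft K (d + d')) LinearMap.id ED
        = TensorProduct.map (LinearMap.mulLeft K d) LinearMap.id ED
          + TensorProduct.map (LinearMap.mulLeft K d') LinearMap.id ED
    rw [hml, TensorProduct.map_add_left, LinearMap.add_apply]
  · intro k d
    have hml : LinearMap.mulLeft K (k • d) = k • LinearMap.mulLeft K d := by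
      ext x; simp [smul_mul_assoc]
    show TensorProduct.map (LinearMap.mulLeft K (k • d)) LinearMap.id ED
        = (RingHom.id K) k • TensorProduct.map (LinearMap.mulLeft K d) LinearMap.id ED
    rw [hml, TensorProduct.map_smul_left, LinearMap.smul_apply, RingHom.id_apply]
  · intro d
    have hc : (LinearMap.mul' K (Module.End A M)) ∘ₗ
        (TensorProduct.map (LinearMap.mulLeft K d) LinearMap.id)
        = (LinearMap.mulLeft K d) ∘ₗ (LinearMap.mul' K (Module.End A M)) := by
      apply TensorProduct.ext'
      intro x y
      simp [mul_assoc]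
    show LinearMap.mul' K (Module.End A M)
        (TensorProduct.map (LinearMap.mulLeft K d) LinearMap.id ED) = d
    rw [← LinearMap.comp_apply, hc, LinearMap.comp_apply, Goal1,
      LinearMap.mulLeft_apply, mul_one]
  · intro a b c
    show TensorProduct.map (LinearMap.mulLeft K (a * b * c)) LinearMap.id ED
        = TensorProduct.map (LinearMap.mulLeft K a) (LinearMap.mulRight K c)
            (TensorProduct.map (LinearMap.mulLeft K b) LinearMap.id ED)
    have hfuse : ∀ (f g : Module.End A M →ₗ[K] Module.End A M)
        (u : Module.End A M ⊗[K] Module.End A M),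
        TensorProduct.map f LinearMap.id (TensorProduct.map g LinearMap.id u)
          = TensorProduct.map (f ∘ₗ g) LinearMap.id u := by
      intro f g u
      rw [← LinearMap.comp_apply, ← TensorProduct.map_comp, LinearMap.id_comp]
    have hsplit : ∀ (f g : Module.End A M →ₗ[K] Module.End A M)
        (u : Module.End A M ⊗[K] Module.End A M),
        TensorProduct.map f g u
          = TensorProduct.map f LinearMap.id (TensorProduct.map LinearMap.id g u) := by
      intro f g u
      rw [← LinearMap.comp_apply, ← TensorProduct.map_comp, LinearMap.comp_id,
        LinearMap.id_comp]
    have hcomm : ∀ (f g : Module.End A M →ₗ[K] Module.End A M)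
        (u : Module.End A M ⊗[K] Module.End A M),
        TensorProduct.map f LinearMap.id (TensorProduct.map LinearMap.id g u)
          = TensorProduct.map LinearMap.id g (TensorProduct.map f LinearMap.id u) := by
      intro f g u
      rw [← LinearMap.comp_apply, ← LinearMap.comp_apply, ← TensorProduct.map_comp,
        ← TensorProduct.map_comp, LinearMap.comp_id, LinearMap.id_comp,
        LinearMap.comp_id, LinearMap.id_comp]
    have hml : LinearMap.mulLeft K (a * b * c)
        = (LinearMap.mulLeft K a) ∘ₗ ((LinearMap.mulLeft K b) ∘ₗ (LinearMap.mulLeft K c)) := by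
      ext x
      simp [mul_assoc]
    rw [hml, ← hfuse, ← hfuse, Goal2 c,
      hsplit (LinearMap.mulLeft K a) (LinearMap.mulRight K c)
        (TensorProduct.map (LinearMap.mulLeft K b) LinearMap.id ED)]
    exact congrArg (TensorProduct.map (LinearMap.mulLeft K a) LinearMap.id)
      (hcomm (LinearMap.mulLeft K b) (LinearMap.mulRight K c) ED)
end
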